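/- arXiv:math/0205055 — 6 statements merged into one kernel-verified Lean document; each statement's English description precedes it below -/
import Mathlib

section
/- Jacobi's triple product identity: ∑_{t=-∞}^{∞} q^{t(t+1)/2} z^{-t} = ∏_{n≥1}(1 - q^n)(1 + z q^{n-1})(1 + q^n/z), valid for |q| < 1 and z ≠ 0. -/
open Finset Filter Topology

namespace JTP

/-- Finite q-Pochhammer: `∏_{j=1}^m (1 - q^j)`. -/
noncomputable def Pp (q : ℂ) (m : ℕ) : ℂ := ∏ j ∈ Finset.range m, (1 - q ^ (j + 1))

/-- Gaussian binomial coefficient (as a complex number). -/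
noncomputable def qb (q : ℂ) (m : ℕ) (k : ℤ) : ℂ :=
  if 0 ≤ k ∧ k ≤ m then Pp q m / (Pp q k.toNat * Pp q (m - k.toNat)) else 0

/-- Coefficient in the finite Jacobi triple product. -/
noncomputable def coefA (q : ℂ) (N : ℕ) (t : ℤ) : ℂ :=
  qb q (2 * N) (N + t) * q ^ (t * (t + 1) / 2)

lemma T_succ (t : ℤ) : (t + 1) * (t + 1 + 1) / 2 = t * (t + 1) / 2 + (t + 1) := by
  obtain ⟨k, hk⟩ := Int.even_mul_succ_self t
  have h2 : (t + 1) * (t + 1 + 1) = 2 * (k + t + 1) := by nlinarith [hk]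
  omega

lemma T_pred (t : ℤ) : (t - 1) * (t - 1 + 1) / 2 = t * (t + 1) / 2 - t := by
  obtain ⟨k, hk⟩ := Int.even_mul_succ_self t
  have h2 : (t - 1) * (t - 1 + 1) = 2 * (k - t) := by nlinarith [hk]
  omega

lemma T_nonneg (t : ℤ) : 0 ≤ t * (t + 1) / 2 := by
  obtain ⟨k, hk⟩ := Int.even_mul_succ_self t
  have h3 : 0 ≤ t * (t + 1) := by nlinarith [sq_nonneg (2 * t + 1)]
  omega

lemma T_pos (t : ℤ) (h : t ≠ 0) (h2 : t ≠ -1) : 0 < t * (t + 1) / 2 := by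
  obtain ⟨k, hk⟩ := Int.even_mul_succ_self t
  have h3 : 2 ≤ t * (t + 1) := by
    rcases lt_or_gt_of_ne h with h' | h'
    · have ht : t ≤ -2 := by omega
      nlinarith
    · nlinarith
  omega

variable {q z : ℂ}

lemma one_sub_pow_ne_zero (hq : ‖q‖ < 1) (n : ℕ) : (1 : ℂ) - q ^ (n + 1) ≠ 0 := by
  intro h
  have h1 : q ^ (n + 1) = 1 := by linear_combination -h
  have h2 : ‖q ^ (n + 1)‖ < 1 := by
    rw [norm_pow]
    exact pow_lt_one₀ (norm_nonneg q) hq (Nat.succ_ne_zero n)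
  rw [h1, norm_one] at h2
  exact lt_irrefl 1 h2

lemma Pp_ne_zero (hq : ‖q‖ < 1) (m : ℕ) : Pp q m ≠ 0 :=
  Finset.prod_ne_zero_iff.2 fun j _ => one_sub_pow_ne_zero hq j

lemma Pp_succ (m : ℕ) : Pp q (m + 1) = Pp q m * (1 - q ^ (m + 1)) :=
  Finset.prod_range_succ _ m

lemma Pp_zero : Pp q 0 = 1 := rfl

lemma pascal1_interior (hq : ‖q‖ < 1) (c b : ℕ) :
    Pp q (c + b + 2) / (Pp q (c + 1) * Pp q (b + 1)) =
      Pp q (c + b + 1) / (Pp q (c + 1) * Pp q b)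
        + q ^ (b + 1) * (Pp q (c + b + 1) / (Pp q c * Pp q (b + 1))) := by
  have e1 : Pp q (c + b + 2) = Pp q (c + b + 1) * (1 - q ^ (c + b + 2)) := by
    have := Pp_succ (q := q) (c + b + 1); rwa [show c + b + 1 + 1 = c + b + 2 from rfl] at this
  have e2 : Pp q (b + 1) = Pp q b * (1 - q ^ (b + 1)) := Pp_succ b
  have e3 : Pp q (c + 1) = Pp q c * (1 - q ^ (c + 1)) := Pp_succ c
  rw [e1, e2, e3]
  have h1 := Pp_ne_zero hq (c + b + 1)
  have h2 := Pp_ne_zero hq b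
  have h3 := Pp_ne_zero hq c
  have h4 := one_sub_pow_ne_zero hq b
  have h5 := one_sub_pow_ne_zero hq c
  field_simp
  ring

lemma pascal2_interior (hq : ‖q‖ < 1) (c b : ℕ) :
    Pp q (c + b + 2) / (Pp q (c + 1) * Pp q (b + 1)) =
      q ^ (c + 1) * (Pp q (c + b + 1) / (Pp q (c + 1) * Pp q b))
        + Pp q (c + b + 1) / (Pp q c * Pp q (b + 1)) := by
  have e1 : Pp q (c + b + 2) = Pp q (c + b + 1) * (1 - q ^ (c + b + 2)) := by
    have := Pp_succ (q := q) (c + b + 1); rwa [show c + b + 1 + 1 = c + b + 2 from rfl] at this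
  have e2 : Pp q (b + 1) = Pp q b * (1 - q ^ (b + 1)) := Pp_succ b
  have e3 : Pp q (c + 1) = Pp q c * (1 - q ^ (c + 1)) := Pp_succ c
  rw [e1, e2, e3]
  have h1 := Pp_ne_zero hq (c + b + 1)
  have h2 := Pp_ne_zero hq b
  have h3 := Pp_ne_zero hq c
  have h4 := one_sub_pow_ne_zero hq b
  have h5 := one_sub_pow_ne_zero hq c
  field_simp
  ring

lemma qb_zero (hq : ‖q‖ < 1) (m : ℕ) : qb q m 0 = 1 := by
  rw [qb, if_pos ⟨le_refl 0, by exact_mod_cast Nat.zero_le m⟩]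
  simp only [Int.toNat_zero, Nat.sub_zero]
  rw [show Pp q 0 = 1 from rfl, one_mul, div_self (Pp_ne_zero hq m)]

lemma qb_top (hq : ‖q‖ < 1) (m : ℕ) : qb q m m = 1 := by
  rw [qb, if_pos ⟨by positivity, le_refl _⟩]
  have h1 : ((m : ℤ)).toNat = m := by omega
  rw [h1, Nat.sub_self]
  rw [show Pp q 0 = 1 from rfl, mul_one, div_self (Pp_ne_zero hq m)]

lemma qb_neg (m : ℕ) {k : ℤ} (h : k < 0) : qb q m k = 0 := by
  rw [qb, if_neg]; omega

lemma qb_gt (m : ℕ) {k : ℤ} (h : (m : ℤ) < k) : qb q m k = 0 := by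
  rw [qb, if_neg]; omega

lemma pascal1 (hq : ‖q‖ < 1) (m : ℕ) (k : ℤ) :
    qb q (m + 1) k = qb q m k + q ^ ((m : ℤ) + 1 - k) * qb q m (k - 1) := by
  rcases lt_or_ge k 0 with hneg | h0
  · rw [qb_neg _ hneg, qb_neg _ hneg, qb_neg m (by omega)]; ring
  rcases eq_or_lt_of_le h0 with h0' | hpos
  · rw [← h0', qb_zero hq, qb_zero hq, qb_neg m (by omega)]; ring
  rcases lt_or_ge (m : ℤ) k with hbig | hle
  · rcases lt_or_ge ((m : ℤ) + 1) k with hgt | hle2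
    · rw [qb_gt (m + 1) (by push_cast; omega), qb_gt m (by omega), qb_gt m (by omega)]; ring
    · have hk : k = (m : ℤ) + 1 := by omega
      subst hk
      have e1 : qb q (m + 1) ((m : ℤ) + 1) = 1 := by
        have := qb_top hq (q := q) (m + 1); rwa [show ((m + 1 : ℕ) : ℤ) = (m : ℤ) + 1 from by push_cast; ring] at this
      have e2 : qb q m ((m : ℤ) + 1 - 1) = 1 := by
        rw [show (m : ℤ) + 1 - 1 = (m : ℤ) from by ring]; exact qb_top hq m
      rw [e1, e2, qb_gt m (by omega), show (m : ℤ) + 1 - ((m : ℤ) + 1) = 0 from by ring, zpow_zero]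
      ring
  · -- interior : 1 ≤ k ≤ m
    obtain ⟨c, hc⟩ : ∃ c : ℕ, k = (c : ℤ) + 1 := ⟨(k - 1).toNat, by omega⟩
    obtain ⟨b, hb⟩ : ∃ b : ℕ, m = c + 1 + b := ⟨m - (c + 1), by omega⟩
    subst hc hb
    have hc1 : ((c : ℤ) + 1).toNat = c + 1 := by omega
    have hc2 : ((c : ℤ) + 1 - 1).toNat = c := by omega
    rw [qb, qb, qb, if_pos (by constructor <;> push_cast <;> omega),
      if_pos (by constructor <;> push_cast <;> omega),
      if_pos (by constructor <;> push_cast <;> omega), hc1, hc2,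
      show c + 1 + b + 1 - (c + 1) = b + 1 from by omega,
      show c + 1 + b - (c + 1) = b from by omega,
      show c + 1 + b - c = b + 1 from by omega,
      show ((c + 1 + b : ℕ) : ℤ) + 1 - ((c : ℤ) + 1) = ((b + 1 : ℕ) : ℤ) from by push_cast; ring,
      zpow_natCast,
      show c + 1 + b + 1 = c + b + 2 from by omega,
      show c + 1 + b = c + b + 1 from by omega]
    exact pascal1_interior hq c b

lemma pascal2 (hq : ‖q‖ < 1) (m : ℕ) (k : ℤ) :
    qb q (m + 1) k = q ^ k * qb q m k + qb q m (k - 1) := by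
  rcases lt_or_ge k 0 with hneg | h0
  · rw [qb_neg _ hneg, qb_neg _ hneg, qb_neg m (by omega)]; ring
  rcases eq_or_lt_of_le h0 with h0' | hpos
  · rw [← h0', qb_zero hq, qb_zero hq, qb_neg m (by omega), zpow_zero]; ring
  rcases lt_or_ge (m : ℤ) k with hbig | hle
  · rcases lt_or_ge ((m : ℤ) + 1) k with hgt | hle2
    · rw [qb_gt (m + 1) (by push_cast; omega), qb_gt m (by omega), qb_gt m (by omega)]; ring
    · have hk : k = (m : ℤ) + 1 := by omega
      subst hk
      have e1 : qb q (m + 1) ((m : ℤ) + 1) = 1 := by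
        have := qb_top hq (q := q) (m + 1); rwa [show ((m + 1 : ℕ) : ℤ) = (m : ℤ) + 1 from by push_cast; ring] at this
      have e2 : qb q m ((m : ℤ) + 1 - 1) = 1 := by
        rw [show (m : ℤ) + 1 - 1 = (m : ℤ) from by ring]; exact qb_top hq m
      rw [e1, e2, qb_gt m (by omega)]
      ring
  · obtain ⟨c, hc⟩ : ∃ c : ℕ, k = (c : ℤ) + 1 := ⟨(k - 1).toNat, by omega⟩
    obtain ⟨b, hb⟩ : ∃ b : ℕ, m = c + 1 + b := ⟨m - (c + 1), by omega⟩
    subst hc hb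
    have hc1 : ((c : ℤ) + 1).toNat = c + 1 := by omega
    have hc2 : ((c : ℤ) + 1 - 1).toNat = c := by omega
    rw [qb, qb, qb, if_pos (by constructor <;> push_cast <;> omega),
      if_pos (by constructor <;> push_cast <;> omega),
      if_pos (by constructor <;> push_cast <;> omega), hc1, hc2,
      show c + 1 + b + 1 - (c + 1) = b + 1 from by omega,
      show c + 1 + b - (c + 1) = b from by omega,
      show c + 1 + b - c = b + 1 from by omega,
      show (c : ℤ) + 1 = ((c + 1 : ℕ) : ℤ) from by push_cast; ring,
      zpow_natCast,
      show c + 1 + b + 1 = c + b + 2 from by omega,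
      show c + 1 + b = c + b + 1 from by omega]
    exact pascal2_interior hq c b

lemma star (hq : ‖q‖ < 1) (hq0 : q ≠ 0) (N : ℕ) (t : ℤ) :
    coefA q (N + 1) t = (1 + q ^ (2 * N + 1)) * coefA q N t
      + q ^ N * coefA q N (t + 1) + q ^ (N + 1) * coefA q N (t - 1) := by
  have harg : ((N + 1 : ℕ) : ℤ) + t = (N : ℤ) + 1 + t := by push_cast; ring
  have h2 : 2 * (N + 1) = (2 * N + 1) + 1 := by omega
  rw [coefA, coefA, coefA, coefA, harg, h2, pascal2 hq (2 * N + 1) ((N : ℤ) + 1 + t),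
    pascal1 hq (2 * N) ((N : ℤ) + 1 + t), pascal1 hq (2 * N) ((N : ℤ) + 1 + t - 1)]
  rw [T_succ, T_pred]
  set s := t * (t + 1) / 2 with hs
  set A := qb q (2 * N) ((N : ℤ) + 1 + t) with hA
  set B := qb q (2 * N) ((N : ℤ) + 1 + t - 1) with hB
  set C := qb q (2 * N) ((N : ℤ) + 1 + t - 1 - 1) with hC
  have eB : qb q (2 * N) ((N : ℤ) + t) = B := by rw [hB]; congr 1; ring
  have eA : qb q (2 * N) ((N : ℤ) + (t + 1)) = A := by rw [hA]; congr 1; ring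
  have eC : qb q (2 * N) ((N : ℤ) + (t - 1)) = C := by rw [hC]; congr 1; ring
  rw [eB, eA, eC]
  have p1 : q ^ ((N : ℤ) + 1 + t) * q ^ s = q ^ (N : ℕ) * q ^ (s + (t + 1)) := by
    rw [← zpow_natCast q N, ← zpow_add₀ hq0, ← zpow_add₀ hq0]; congr 1; ring
  have p2 : q ^ ((N : ℤ) + 1 + t) * q ^ (((2 * N : ℕ) : ℤ) + 1 - ((N : ℤ) + 1 + t)) = q ^ (2 * N + 1 : ℕ) := by
    rw [← zpow_natCast q (2 * N + 1), ← zpow_add₀ hq0]; congr 1; push_cast; ring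
  have p3 : q ^ (((2 * N : ℕ) : ℤ) + 1 - ((N : ℤ) + 1 + t - 1)) * q ^ s = q ^ (N + 1 : ℕ) * q ^ (s - t) := by
    rw [← zpow_natCast q (N + 1), ← zpow_add₀ hq0, ← zpow_add₀ hq0]; congr 1; push_cast; ring
  linear_combination A * p1 + B * q ^ s * p2 + C * p3

lemma coefA_eq_zero {N : ℕ} {t : ℤ} (h : t < -(N : ℤ) ∨ (N : ℤ) < t) : coefA q N t = 0 := by
  rw [coefA, qb, if_neg, zero_mul]
  push_cast
  omega

lemma coefA_vanish (N : ℕ) (c : ℤ) :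
    ∀ t ∉ Finset.Icc (-(N : ℤ) - 1 + c) ((N : ℤ) + 1 + c), coefA q N (t - c) * z ^ (-t) = 0 := by
  intro t ht
  rw [coefA_eq_zero, zero_mul]
  simp only [Finset.mem_Icc] at ht
  omega

lemma summable_coefA (N : ℕ) (c : ℤ) : Summable (fun t : ℤ => coefA q N (t - c) * z ^ (-t)) :=
  summable_of_ne_finset_zero (coefA_vanish N c)

lemma finJTP (hq : ‖q‖ < 1) (hq0 : q ≠ 0) (hz : z ≠ 0) (N : ℕ) :
    ∑' t : ℤ, coefA q N t * z ^ (-t)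
      = ∏ j ∈ Finset.range N, ((1 + z * q ^ j) * (1 + q ^ (j + 1) / z)) := by
  induction N with
  | zero =>
    rw [Finset.prod_range_zero]
    rw [tsum_eq_single 0 (fun t ht => by
      rw [coefA_eq_zero (by omega : t < -(0:ℤ) ∨ (0:ℤ) < t), zero_mul])]
    rw [coefA, show ((0:ℕ):ℤ) + 0 = 0 from rfl, qb_zero hq]
    norm_num
  | succ N ih =>
    rw [Finset.prod_range_succ, ← ih]
    have hS : Summable (fun t : ℤ => coefA q N t * z ^ (-t)) := by
      simpa using summable_coefA (z := z) N 0
    have hS1 : Summable (fun t : ℤ => coefA q N (t + 1) * z ^ (-t)) := by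
      simpa using summable_coefA (z := z) N (-1)
    have hS2 : Summable (fun t : ℤ => coefA q N (t - 1) * z ^ (-t)) := by
      simpa using summable_coefA (z := z) N 1
    set S := ∑' t : ℤ, coefA q N t * z ^ (-t) with hSdef
    have shift1 : ∑' t : ℤ, coefA q N (t + 1) * z ^ (-t) = S * z := by
      calc ∑' t : ℤ, coefA q N (t + 1) * z ^ (-t)
          = ∑' u : ℤ, coefA q N u * z ^ (-(u - 1)) := by
            rw [← Equiv.tsum_eq (Equiv.addRight (1 : ℤ))
              (fun u => coefA q N u * z ^ (-(u - 1)))]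
            apply tsum_congr
            intro t
            simp only [Equiv.coe_addRight]
            congr 2
            ring
        _ = ∑' u : ℤ, coefA q N u * z ^ (-u) * z := by
            apply tsum_congr
            intro u
            rw [show -(u - 1) = -u + 1 by ring, zpow_add₀ hz, zpow_one, mul_assoc]
        _ = S * z := tsum_mul_right
    have shift2 : ∑' t : ℤ, coefA q N (t - 1) * z ^ (-t) = S * z⁻¹ := by
      calc ∑' t : ℤ, coefA q N (t - 1) * z ^ (-t)
          = ∑' u : ℤ, coefA q N u * z ^ (-(u + 1)) := by
            rw [← Equiv.tsum_eq (Equiv.subRight (1 : ℤ))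
              (fun u => coefA q N u * z ^ (-(u + 1)))]
            apply tsum_congr
            intro t
            simp only [Equiv.subRight_apply]
            congr 2
            ring
        _ = ∑' u : ℤ, coefA q N u * z ^ (-u) * z⁻¹ := by
            apply tsum_congr
            intro u
            rw [show -(u + 1) = -u + (-1) by ring, zpow_add₀ hz, zpow_neg_one, mul_assoc]
        _ = S * z⁻¹ := tsum_mul_right
    calc ∑' t : ℤ, coefA q (N + 1) t * z ^ (-t)
        = ∑' t : ℤ, ((1 + q ^ (2 * N + 1)) * (coefA q N t * z ^ (-t))
            + q ^ N * (coefA q N (t + 1) * z ^ (-t))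
            + q ^ (N + 1) * (coefA q N (t - 1) * z ^ (-t))) := by
          apply tsum_congr
          intro t
          rw [star hq hq0 N t]
          ring
      _ = (1 + q ^ (2 * N + 1)) * S + q ^ N * (S * z) + q ^ (N + 1) * (S * z⁻¹) := by
          rw [Summable.tsum_add ((hS.mul_left _).add (hS1.mul_left _)) (hS2.mul_left _),
            Summable.tsum_add (hS.mul_left _) (hS1.mul_left _),
            tsum_mul_left, tsum_mul_left, tsum_mul_left, shift1, shift2]
      _ = S * ((1 + z * q ^ N) * (1 + q ^ (N + 1) / z)) := by
          field_simp
          ring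

lemma weier {r : ℝ} (h0 : 0 ≤ r) (h1 : r < 1) (s : Finset ℕ) :
    1 - ∑ j ∈ s, r ^ (j + 1) ≤ ∏ j ∈ s, (1 - r ^ (j + 1)) := by
  induction s using Finset.induction with
  | empty => simp
  | @insert a s' hna ih =>
    rw [Finset.prod_insert hna, Finset.sum_insert hna]
    have ha0 : 0 ≤ r ^ (a + 1) := by positivity
    have ha1 : r ^ (a + 1) ≤ 1 := le_of_lt (pow_lt_one₀ h0 h1 (Nat.succ_ne_zero a))
    have hs0 : 0 ≤ ∑ j ∈ s', r ^ (j + 1) := Finset.sum_nonneg fun j _ => by positivity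
    nlinarith [mul_le_mul_of_nonneg_left ih (by linarith : (0:ℝ) ≤ 1 - r ^ (a + 1))]

lemma geom_partial {r : ℝ} (h0 : 0 ≤ r) (h1 : r < 1) (m : ℕ) :
    ∑ i ∈ Finset.range m, r ^ i ≤ (1 - r)⁻¹ := by
  have hsum : Summable (fun i : ℕ => r ^ i) := summable_geometric_of_lt_one h0 h1
  have := Summable.sum_le_tsum (Finset.range m) (fun i _ => by positivity) hsum
  rwa [tsum_geometric_of_lt_one h0 h1] at this

lemma tail_small {r : ℝ} (h0 : 0 ≤ r) (h1 : r < 1) :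
    ∃ J : ℕ, ∀ n : ℕ, ∑ j ∈ Finset.Ico J n, r ^ (j + 1) ≤ 1 / 2 := by
  obtain ⟨J, hJ⟩ := ((tendsto_pow_atTop_nhds_zero_of_lt_one h0 h1).eventually
    (eventually_le_nhds (by linarith : (0:ℝ) < (1 - r) / 2))).exists
  refine ⟨J, fun n => ?_⟩
  calc ∑ j ∈ Finset.Ico J n, r ^ (j + 1)
      = ∑ i ∈ Finset.range (n - J), r ^ (J + i + 1) := by rw [Finset.sum_Ico_eq_sum_range]
    _ = ∑ i ∈ Finset.range (n - J), r ^ (J + 1) * r ^ i := by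
        apply Finset.sum_congr rfl
        intro i _
        rw [← pow_add]
        congr 1
        omega
    _ = r ^ (J + 1) * ∑ i ∈ Finset.range (n - J), r ^ i := by rw [Finset.mul_sum]
    _ ≤ r ^ (J + 1) * (1 - r)⁻¹ := by
        apply mul_le_mul_of_nonneg_left (geom_partial h0 h1 _) (by positivity)
    _ ≤ ((1 - r) / 2) * (1 - r)⁻¹ := by
        apply mul_le_mul_of_nonneg_right _ (inv_nonneg.2 (by linarith))
        calc r ^ (J + 1) ≤ r ^ J := pow_le_pow_of_le_one h0 (le_of_lt h1) (by omega)
          _ ≤ (1 - r) / 2 := hJ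
    _ = 1 / 2 := by
        rw [div_mul_eq_mul_div, mul_inv_cancel₀ (by linarith : (1:ℝ) - r ≠ 0)]
lemma lower_bound {r : ℝ} (h0 : 0 ≤ r) (h1 : r < 1) :
    ∃ c : ℝ, 0 < c ∧ ∀ n : ℕ, c ≤ ∏ j ∈ Finset.range n, (1 - r ^ (j + 1)) := by
  have hpos : ∀ j : ℕ, (0:ℝ) < 1 - r ^ (j + 1) := fun j =>
    sub_pos.2 (pow_lt_one₀ h0 h1 (Nat.succ_ne_zero j))
  obtain ⟨J, hJ⟩ := tail_small h0 h1
  have hJpos : (0:ℝ) < ∏ j ∈ Finset.range J, (1 - r ^ (j + 1)) :=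
    Finset.prod_pos fun j _ => hpos j
  refine ⟨(∏ j ∈ Finset.range J, (1 - r ^ (j + 1))) * (1 / 2),
    by positivity, fun n => ?_⟩
  rcases le_or_gt n J with hn | hn
  · have h2 : ∏ j ∈ Finset.range J, (1 - r ^ (j + 1))
        ≤ ∏ j ∈ Finset.range n, (1 - r ^ (j + 1)) := by
      rw [← Finset.prod_range_mul_prod_Ico _ hn]
      have hle1 : ∏ j ∈ Finset.Ico n J, (1 - r ^ (j + 1)) ≤ 1 :=
        Finset.prod_le_one (fun j _ => le_of_lt (hpos j))
          (fun j _ => by nlinarith [pow_nonneg h0 (j + 1)])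
      have hp : (0:ℝ) < ∏ j ∈ Finset.range n, (1 - r ^ (j + 1)) :=
        Finset.prod_pos fun j _ => hpos j
      nlinarith
    nlinarith
  · rw [← Finset.prod_range_mul_prod_Ico _ (le_of_lt hn)]
    have h3 : 1 / 2 ≤ ∏ j ∈ Finset.Ico J n, (1 - r ^ (j + 1)) := by
      have hw := weier h0 h1 (Finset.Ico J n)
      have ht := hJ n
      linarith
    nlinarith

lemma upper_bound {r : ℝ} (h0 : 0 ≤ r) (h1 : r < 1) (n : ℕ) :
    ∏ j ∈ Finset.range n, (1 + r ^ (j + 1)) ≤ Real.exp ((1 - r)⁻¹) := by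
  calc ∏ j ∈ Finset.range n, (1 + r ^ (j + 1))
      ≤ ∏ j ∈ Finset.range n, Real.exp (r ^ (j + 1)) := by
        apply Finset.prod_le_prod (fun j _ => by positivity)
        intro j _
        have := Real.add_one_le_exp (r ^ (j + 1))
        linarith
    _ = Real.exp (∑ j ∈ Finset.range n, r ^ (j + 1)) := (Real.exp_sum _ _).symm
    _ ≤ Real.exp ((1 - r)⁻¹) := by
        apply Real.exp_le_exp.2
        calc ∑ j ∈ Finset.range n, r ^ (j + 1)
            ≤ ∑ j ∈ Finset.range n, r ^ j := by
              apply Finset.sum_le_sum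
              intro j _
              exact pow_le_pow_of_le_one h0 (le_of_lt h1) (by omega)
          _ ≤ (1 - r)⁻¹ := geom_partial h0 h1 n

lemma hasProd_zero_of_exists_eq_zero {f : ℕ → ℂ} (h : ∃ n, f n = 0) : HasProd f 0 := by
  obtain ⟨n0, hn0⟩ := h
  rw [HasProd]
  apply Tendsto.congr' _ tendsto_const_nhds
  filter_upwards [Filter.eventually_atTop.2 ⟨{n0}, fun s hs => hs⟩] with s hs
  exact (Finset.prod_eq_zero (hs (Finset.mem_singleton_self n0)) hn0).symm

lemma multipliable_one_add (u : ℕ → ℂ) (hu : Summable u) :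
    Multipliable (fun n => 1 + u n) := by
  by_cases hz : ∃ n, (1 : ℂ) + u n = 0
  · exact ⟨0, hasProd_zero_of_exists_eq_zero hz⟩
  push_neg at hz
  have hsmall : ∀ᶠ n in atTop, ‖u n‖ ≤ 1/2 := by
    have := (Metric.tendsto_atTop.1 hu.tendsto_atTop_zero (1/2) (by norm_num))
    obtain ⟨N, hN⟩ := this
    exact Filter.eventually_atTop.2 ⟨N, fun n hn => by
      have := hN n hn; rw [dist_zero_right] at this; exact le_of_lt this⟩
  have hlog : Summable (fun n => Complex.log (1 + u n)) := by
    apply Summable.of_norm_bounded_eventually_nat (g := fun n => (3/2) * ‖u n‖)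
      (hu.norm.mul_left _)
    filter_upwards [hsmall] with n hn
    exact Complex.norm_log_one_add_half_le_self hn
  exact Complex.multipliable_of_summable_log hlog

lemma norm_Pp_le (hq : ‖q‖ < 1) (m : ℕ) : ‖Pp q m‖ ≤ Real.exp ((1 - ‖q‖)⁻¹) := by
  rw [Pp, norm_prod]
  refine le_trans (Finset.prod_le_prod (fun j _ => norm_nonneg _) (fun j _ => ?_))
    (upper_bound (norm_nonneg q) hq m)
  calc ‖1 - q ^ (j + 1)‖ ≤ ‖(1:ℂ)‖ + ‖q ^ (j + 1)‖ := norm_sub_le _ _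
    _ = 1 + ‖q‖ ^ (j + 1) := by rw [norm_one, norm_pow]

lemma le_norm_Pp (hq : ‖q‖ < 1) (m : ℕ) :
    ∏ j ∈ Finset.range m, (1 - ‖q‖ ^ (j + 1)) ≤ ‖Pp q m‖ := by
  rw [Pp, norm_prod]
  apply Finset.prod_le_prod
  · intro j _
    have : ‖q‖ ^ (j + 1) < 1 := pow_lt_one₀ (norm_nonneg q) hq (Nat.succ_ne_zero j)
    linarith
  · intro j _
    calc 1 - ‖q‖ ^ (j + 1) = ‖(1:ℂ)‖ - ‖q ^ (j + 1)‖ := by rw [norm_one, norm_pow]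
      _ ≤ ‖1 - q ^ (j + 1)‖ := norm_sub_norm_le _ _

lemma qb_bound (hq : ‖q‖ < 1) :
    ∃ K : ℝ, 0 < K ∧ ∀ (m : ℕ) (k : ℤ), ‖qb q m k‖ ≤ K := by
  obtain ⟨c, hc, hcle⟩ := lower_bound (norm_nonneg q) hq
  set U := Real.exp ((1 - ‖q‖)⁻¹) with hU
  have hU0 : 0 < U := Real.exp_pos _
  refine ⟨U / (c * c), by positivity, fun m k => ?_⟩
  rw [qb]
  split_ifs with h
  · rw [norm_div, norm_mul]
    apply div_le_div₀ (le_of_lt (by positivity)) (norm_Pp_le hq m) (by positivity)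
    exact mul_le_mul (le_trans (hcle _) (le_norm_Pp hq _))
      (le_trans (hcle _) (le_norm_Pp hq _)) (le_of_lt hc) (norm_nonneg _)
  · rw [norm_zero]
    positivity

lemma summable_aux {f ρ : ℕ → ℝ} (hpos : ∀ n, 0 < f n)
    (hrec : ∀ n, f (n + 1) = f n * ρ n) (hρ0 : ∀ n, 0 ≤ ρ n)
    (hρ : Tendsto ρ atTop (𝓝 0)) : Summable f := by
  apply summable_of_ratio_norm_eventually_le (by norm_num : (1:ℝ)/2 < 1)
  filter_upwards [hρ.eventually (eventually_le_nhds (by norm_num : (0:ℝ) < 1/2))] with n hn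
  rw [Real.norm_eq_abs, Real.norm_eq_abs, abs_of_pos (hpos (n + 1)), abs_of_pos (hpos n),
    hrec n]
  calc f n * ρ n ≤ f n * (1/2) := mul_le_mul_of_nonneg_left hn (le_of_lt (hpos n))
    _ = 1/2 * f n := by ring

lemma summable_dom {r w : ℝ} (hr0 : 0 < r) (hr1 : r < 1) (hw : 0 < w) :
    Summable (fun t : ℤ => r ^ (t * (t + 1) / 2) * w ^ (-t)) := by
  have hrne : r ≠ 0 := ne_of_gt hr0
  have hwne : w ≠ 0 := ne_of_gt hw
  have hpow : Tendsto (fun n : ℕ => r ^ n) atTop (𝓝 0) :=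
    tendsto_pow_atTop_nhds_zero_of_lt_one (le_of_lt hr0) hr1
  apply Summable.of_nat_of_neg
  · apply summable_aux (f := fun n : ℕ => r ^ ((n : ℤ) * ((n : ℤ) + 1) / 2) * w ^ (-(n : ℤ)))
      (ρ := fun n : ℕ => r ^ (n + 1) * w⁻¹)
    · intro n
      positivity
    · intro n
      push_cast
      rw [T_succ, show -((n : ℤ) + 1) = -(n : ℤ) + (-1) by ring,
        zpow_add₀ hrne, zpow_add₀ hwne, zpow_neg_one,
        show ((n : ℤ) + 1 : ℤ) = ((n + 1 : ℕ) : ℤ) by push_cast; ring, zpow_natCast]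
      ring
    · intro n; positivity
    · have : Tendsto (fun n : ℕ => r ^ (n + 1)) atTop (𝓝 0) := by
        rw [show (0:ℝ) = 0 * r by ring]
        exact hpow.mul_const r |>.congr fun n => by rw [pow_succ]
      simpa using this.mul_const w⁻¹
  · apply summable_aux (f := fun n : ℕ => r ^ ((-n : ℤ) * ((-n : ℤ) + 1) / 2) * w ^ (-(-n : ℤ)))
      (ρ := fun n : ℕ => r ^ n * w)
    · intro n
      positivity
    · intro n
      push_cast
      have hT : (-(n:ℤ) - 1) * (-(n:ℤ) - 1 + 1) / 2 = -(n:ℤ) * (-(n:ℤ) + 1) / 2 + (n:ℤ) := by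
        have h := T_pred (-(n:ℤ))
        rw [sub_neg_eq_add] at h
        exact h
      rw [show -((n:ℤ) + 1) = -(n:ℤ) - 1 by ring, hT, zpow_add₀ hrne, zpow_natCast,
        show -(-(n:ℤ) - 1) = -(-(n:ℤ)) + 1 by ring, zpow_add₀ hwne, zpow_one]
      ring
    · intro n; positivity
    · simpa using hpow.mul_const w

lemma summable_q_geom (hq : ‖q‖ < 1) : Summable (fun n : ℕ => q ^ (n + 1)) :=
  ((summable_geometric_of_norm_lt_one hq).mul_left q).congr fun n => by
    rw [pow_succ]; ring

lemma multipliable_L (hq : ‖q‖ < 1) : Multipliable (fun n : ℕ => 1 - q ^ (n + 1)) :=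
  (multipliable_one_add _ (summable_q_geom hq).neg).congr fun n => by ring

lemma tendsto_Pp (hq : ‖q‖ < 1) :
    Tendsto (Pp q) atTop (𝓝 (∏' n : ℕ, (1 - q ^ (n + 1)))) :=
  (multipliable_L hq).hasProd.tendsto_prod_nat

lemma L_ne_zero (hq : ‖q‖ < 1) : (∏' n : ℕ, (1 - q ^ (n + 1))) ≠ 0 := by
  obtain ⟨c, hc, hcle⟩ := lower_bound (norm_nonneg q) hq
  have h1 : c ≤ ‖∏' n : ℕ, (1 - q ^ (n + 1))‖ :=
    ge_of_tendsto' ((tendsto_Pp hq).norm) (fun n => le_trans (hcle n) (le_norm_Pp hq n))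
  intro h
  rw [h, norm_zero] at h1
  linarith

lemma tendsto_qb (hq : ‖q‖ < 1) (t : ℤ) :
    Tendsto (fun N : ℕ => qb q (2 * N) ((N : ℤ) + t)) atTop
      (𝓝 (∏' n : ℕ, (1 - q ^ (n + 1)))⁻¹) := by
  set L := ∏' n : ℕ, (1 - q ^ (n + 1)) with hL
  have hL0 : L ≠ 0 := L_ne_zero hq
  have h1 : Tendsto (fun N : ℕ => Pp q (2 * N)) atTop (𝓝 L) :=
    (tendsto_Pp hq).comp (tendsto_atTop_atTop.2 fun b => ⟨b, fun n hn => by omega⟩)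
  have h2 : Tendsto (fun N : ℕ => Pp q ((N + t).toNat)) atTop (𝓝 L) :=
    (tendsto_Pp hq).comp (tendsto_atTop_atTop.2 fun b => ⟨b + t.natAbs, fun n hn => by omega⟩)
  have h3 : Tendsto (fun N : ℕ => Pp q (((N : ℤ) - t).toNat)) atTop (𝓝 L) :=
    (tendsto_Pp hq).comp (tendsto_atTop_atTop.2 fun b => ⟨b + t.natAbs, fun n hn => by omega⟩)
  have hmain : Tendsto
      (fun N : ℕ => Pp q (2 * N) / (Pp q (((N : ℤ) + t).toNat) * Pp q (((N : ℤ) - t).toNat)))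
      atTop (𝓝 (L / (L * L))) := h1.div (h2.mul h3) (mul_ne_zero hL0 hL0)
  rw [show L / (L * L) = L⁻¹ by field_simp] at hmain
  apply hmain.congr'
  filter_upwards [Filter.eventually_atTop.2 ⟨t.natAbs, fun n hn => hn⟩] with N hN
  rw [qb, if_pos (by constructor <;> push_cast <;> omega)]
  rw [show 2 * N - (((N : ℤ) + t).toNat) = ((N : ℤ) - t).toNat from by omega]

theorem main_ne (hq : ‖q‖ < 1) (hq0 : q ≠ 0) (hz : z ≠ 0) :
    ∑' t : ℤ, q ^ (t * (t + 1) / 2) * z ^ (-t)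
      = ∏' n : ℕ, ((1 - q ^ (n + 1)) * (1 + z * q ^ n) * (1 + q ^ (n + 1) / z)) := by
  set L := ∏' n : ℕ, (1 - q ^ (n + 1)) with hL
  have hL0 : L ≠ 0 := L_ne_zero hq
  -- multipliability of the other factors
  have M2 : Multipliable (fun n : ℕ => 1 + z * q ^ n) :=
    multipliable_one_add _ ((summable_geometric_of_norm_lt_one hq).mul_left z)
  have M3 : Multipliable (fun n : ℕ => 1 + q ^ (n + 1) / z) :=
    multipliable_one_add _ ((summable_q_geom hq).div_const z)
  have Mh : Multipliable (fun n : ℕ => (1 + z * q ^ n) * (1 + q ^ (n + 1) / z)) := M2.mul M3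
  -- dominated convergence
  obtain ⟨K, hK, hKle⟩ := qb_bound hq
  have hq0' : 0 < ‖q‖ := norm_pos_iff.2 hq0
  have hz0' : 0 < ‖z‖ := norm_pos_iff.2 hz
  have hdom : Summable (fun t : ℤ => K * (‖q‖ ^ (t * (t + 1) / 2) * ‖z‖ ^ (-t))) :=
    (summable_dom hq0' hq hz0').mul_left K
  have hten : Tendsto (fun N : ℕ => ∑' t : ℤ, coefA q N t * z ^ (-t)) atTop
      (𝓝 (∑' t : ℤ, L⁻¹ * (q ^ (t * (t + 1) / 2) * z ^ (-t)))) := by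
    apply tendsto_tsum_of_dominated_convergence hdom
    · intro t
      have := ((tendsto_qb hq t).mul_const (q ^ (t * (t + 1) / 2))).mul_const (z ^ (-t))
      rw [mul_assoc] at this
      exact this.congr fun N => by rw [coefA]
    · filter_upwards with N t
      rw [coefA, norm_mul, norm_mul, norm_zpow, norm_zpow]
      calc ‖qb q (2 * N) (↑N + t)‖ * ‖q‖ ^ (t * (t + 1) / 2) * ‖z‖ ^ (-t)
          ≤ K * ‖q‖ ^ (t * (t + 1) / 2) * ‖z‖ ^ (-t) := by
            apply mul_le_mul_of_nonneg_right _ (le_of_lt (zpow_pos hz0' _))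
            exact mul_le_mul_of_nonneg_right (hKle _ _) (le_of_lt (zpow_pos hq0' _))
        _ = K * (‖q‖ ^ (t * (t + 1) / 2) * ‖z‖ ^ (-t)) := by ring
  have hten2 : Tendsto (fun N : ℕ => ∑' t : ℤ, coefA q N t * z ^ (-t)) atTop
      (𝓝 (∏' n : ℕ, ((1 + z * q ^ n) * (1 + q ^ (n + 1) / z)))) := by
    apply Mh.hasProd.tendsto_prod_nat.congr
    intro N
    exact (finJTP hq hq0 hz N).symm
  have huniq := tendsto_nhds_unique hten hten2
  rw [tsum_mul_left] at huniq
  have hfinal : ∑' t : ℤ, q ^ (t * (t + 1) / 2) * z ^ (-t)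
      = L * ∏' n : ℕ, ((1 + z * q ^ n) * (1 + q ^ (n + 1) / z)) := by
    rw [← huniq]
    field_simp
  rw [hfinal, ← Multipliable.tprod_mul (multipliable_L hq) Mh]
  exact tprod_congr fun n => by ring

theorem main_zero (z : ℂ) (hz : z ≠ 0) :
    ∑' t : ℤ, (0:ℂ) ^ (t * (t + 1) / 2) * z ^ (-t)
      = ∏' n : ℕ, ((1 - (0:ℂ) ^ (n + 1)) * (1 + z * (0:ℂ) ^ n) * (1 + (0:ℂ) ^ (n + 1) / z)) := by
  have hL : ∑' t : ℤ, (0:ℂ) ^ (t * (t + 1) / 2) * z ^ (-t)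
      = ∑ t ∈ ({-1, 0} : Finset ℤ), (0:ℂ) ^ (t * (t + 1) / 2) * z ^ (-t) := by
    apply tsum_eq_sum
    intro t ht
    simp only [Finset.mem_insert, Finset.mem_singleton] at ht
    push_neg at ht
    rw [zero_zpow _ (ne_of_gt (T_pos t ht.2 ht.1)), zero_mul]
  rw [hL]
  rw [Finset.sum_insert (by decide), Finset.sum_singleton]
  have hR : ∏' n : ℕ, ((1 - (0:ℂ) ^ (n + 1)) * (1 + z * (0:ℂ) ^ n) * (1 + (0:ℂ) ^ (n + 1) / z))
      = ∏ n ∈ ({0} : Finset ℕ), ((1 - (0:ℂ) ^ (n + 1)) * (1 + z * (0:ℂ) ^ n) * (1 + (0:ℂ) ^ (n + 1) / z)) := by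
    apply tprod_eq_prod
    intro n hn
    simp only [Finset.mem_singleton] at hn
    rw [zero_pow (Nat.succ_ne_zero n), zero_pow hn]
    ring
  rw [hR, Finset.prod_singleton]
  norm_num
  ring


end JTP

/-- Jacobi's triple product identity: for `|q| < 1` and `z ≠ 0`,
`∑_{t ∈ ℤ} q^{t(t+1)/2} z^{-t} = ∏_{n ≥ 1} (1 - q^n)(1 + z q^{n-1})(1 + q^n / z)`. -/
theorem jacobi_triple_product (q z : ℂ) (hq : ‖q‖ < 1) (hz : z ≠ 0) :
    ∑' t : ℤ, q ^ (t * (t + 1) / 2) * z ^ (-t)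
    = ∏' n : ℕ, ((1 - q ^ (n + 1)) * (1 + z * q ^ n) * (1 + q ^ (n + 1) / z)) := by
  by_cases hq0 : q = 0
  · subst hq0
    exact JTP.main_zero z hz
  · exact JTP.main_ne hq hq0 hz
end

section
/- Euler's identity: ∑_{n≥0} z^n / (q)_n = 1/(z; q)_∞ as formal power series (or for |q| < 1, |z| < 1), where (q)_n = ∏_{j=1}^n (1 - q^j) and (z;q)_∞ = ∏_{j≥0}(1 - z q^j). -/
open Finset Filter Topology

namespace EulerAux

noncomputable def P (q : ℂ) (n : ℕ) : ℂ := ∏ j ∈ Finset.range n, (1 - q ^ (j + 1))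

lemma one_sub_ne {w : ℂ} (hw : ‖w‖ < 1) : (1 : ℂ) - w ≠ 0 := by
  rw [sub_ne_zero]
  intro h
  rw [← h] at hw
  simp at hw

lemma norm_pow_lt {q : ℂ} (hq : ‖q‖ < 1) (j : ℕ) : ‖q ^ (j + 1)‖ < 1 := by
  rw [norm_pow]
  exact pow_lt_one₀ (norm_nonneg q) hq (Nat.succ_ne_zero j)

lemma P_ne {q : ℂ} (hq : ‖q‖ < 1) (n : ℕ) : P q n ≠ 0 :=
  Finset.prod_ne_zero_iff.mpr fun j _ => one_sub_ne (norm_pow_lt hq j)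

lemma P_succ (q : ℂ) (n : ℕ) : P q (n + 1) = P q n * (1 - q ^ (n + 1)) := by
  simp [P, Finset.prod_range_succ]

lemma summable_normed {q : ℂ} (hq : ‖q‖ < 1) {c : ℝ} (hc0 : 0 ≤ c) (hc : c < 1) :
    Summable (fun n : ℕ => c ^ n / ‖P q n‖) := by
  apply summable_of_ratio_norm_eventually_le (r := (1 + c) / 2) (by linarith)
  have h1 : Tendsto (fun n : ℕ => ‖q ^ (n + 1)‖) atTop (𝓝 0) := by
    have := tendsto_pow_atTop_nhds_zero_of_norm_lt_one (x := q) hq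
    rw [tendsto_zero_iff_norm_tendsto_zero] at this
    exact this.comp (tendsto_add_atTop_nat 1)
  have h2 : ∀ᶠ n : ℕ in atTop, ‖q ^ (n + 1)‖ < (1 - c) / 2 :=
    h1.eventually_lt_const (by linarith : (0:ℝ) < (1 - c)/2)
  filter_upwards [h2] with n hn
  have hPn : ‖P q n‖ ≠ 0 := norm_ne_zero_iff.mpr (P_ne hq n)
  have hPn' : (0:ℝ) < ‖P q n‖ := lt_of_le_of_ne (norm_nonneg _) (Ne.symm hPn)
  have hfac : (1 + c) / 2 ≤ ‖1 - q ^ (n + 1)‖ := by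
    have := norm_sub_norm_le (1 : ℂ) (q ^ (n + 1))
    simp only [norm_one] at this
    linarith
  have hfac0 : (0:ℝ) < ‖1 - q ^ (n + 1)‖ := by linarith
  rw [Real.norm_of_nonneg (by positivity), Real.norm_of_nonneg (by positivity),
    P_succ, norm_mul]
  have key : c ^ (n + 1) / (‖P q n‖ * ‖1 - q ^ (n + 1)‖)
      = (c ^ n / ‖P q n‖) * (c / ‖1 - q ^ (n + 1)‖) := by
    rw [pow_succ]; field_simp
  rw [key]
  have hcr : c / ‖1 - q ^ (n + 1)‖ ≤ (1 + c) / 2 := by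
    rw [div_le_iff₀ hfac0]; nlinarith
  calc (c ^ n / ‖P q n‖) * (c / ‖1 - q ^ (n + 1)‖)
      ≤ (c ^ n / ‖P q n‖) * ((1 + c) / 2) := by gcongr <;> positivity
    _ = (1 + c) / 2 * (c ^ n / ‖P q n‖) := by ring

lemma summable_F {q : ℂ} (hq : ‖q‖ < 1) {w : ℂ} (hw : ‖w‖ < 1) :
    Summable (fun n : ℕ => w ^ n / P q n) := by
  apply Summable.of_norm
  have := summable_normed hq (norm_nonneg w) hw
  simpa [norm_div, norm_pow] using this

noncomputable def F (q w : ℂ) : ℂ := ∑' n : ℕ, w ^ n / P q n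

lemma func_eq {q : ℂ} (hq : ‖q‖ < 1) {w : ℂ} (hw : ‖w‖ < 1) :
    F q w * (1 - w) = F q (q * w) := by
  have hqw : ‖q * w‖ < 1 := by
    rw [norm_mul]
    calc ‖q‖ * ‖w‖ ≤ 1 * ‖w‖ := by gcongr ?_ * ?_ <;> first | exact hq.le | rfl
      _ < 1 := by simpa using hw
  have hs1 := summable_F hq hw
  have hs2 := summable_F hq hqw
  have key : F q w - F q (q * w) = w * F q w := by
    have heq : F q w - F q (q * w) = ∑' n : ℕ, (w ^ n / P q n - (q * w) ^ n / P q n) :=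
      (Summable.tsum_sub hs1 hs2).symm
    rw [heq, Summable.tsum_eq_zero_add (hs1.sub hs2)]
    have h0 : w ^ 0 / P q 0 - (q * w) ^ 0 / P q 0 = 0 := by simp [P]
    rw [h0, zero_add]
    have hterm : ∀ n : ℕ, w ^ (n + 1) / P q (n + 1) - (q * w) ^ (n + 1) / P q (n + 1)
        = w * (w ^ n / P q n) := by
      intro n
      have hne : (1 : ℂ) - q ^ (n + 1) ≠ 0 := one_sub_ne (norm_pow_lt hq n)
      have hPne : P q n ≠ 0 := P_ne hq n
      rw [P_succ]
      field_simp
      ring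
    rw [tsum_congr hterm, tsum_mul_left]
    rfl
  linear_combination key

lemma norm_pow_mul_lt {q z : ℂ} (hq : ‖q‖ < 1) (hz : ‖z‖ < 1) (N : ℕ) :
    ‖q ^ N * z‖ < 1 := by
  rw [norm_mul, norm_pow]
  calc ‖q‖ ^ N * ‖z‖ ≤ 1 * ‖z‖ := by
        gcongr
        exact pow_le_one₀ (norm_nonneg q) hq.le
    _ < 1 := by simpa using hz

lemma iterate_eq {q z : ℂ} (hq : ‖q‖ < 1) (hz : ‖z‖ < 1) (N : ℕ) :
    F q z * ∏ j ∈ Finset.range N, (1 - z * q ^ j) = F q (q ^ N * z) := by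
  induction N with
  | zero => simp
  | succ N ih =>
    rw [Finset.prod_range_succ, ← mul_assoc, ih]
    have h1 : (1 : ℂ) - z * q ^ N = 1 - q ^ N * z := by ring
    rw [h1, func_eq hq (norm_pow_mul_lt hq hz N)]
    congr 1
    ring

lemma summable_shifted {q : ℂ} (hq : ‖q‖ < 1) {c : ℝ} (hc0 : 0 ≤ c) (hc : c < 1) :
    Summable (fun n : ℕ => c ^ n / ‖P q (n + 1)‖) := by
  have hq1 : (0:ℝ) < 1 - ‖q‖ := by linarith
  refine Summable.of_nonneg_of_le (f := fun n => (1 - ‖q‖)⁻¹ * (c ^ n / ‖P q n‖))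
    (fun n => by positivity) ?_ ?_
  · intro n
    have hPn' : (0:ℝ) < ‖P q n‖ :=
      lt_of_le_of_ne (norm_nonneg _) (Ne.symm (norm_ne_zero_iff.mpr (P_ne hq n)))
    have hfac : 1 - ‖q‖ ≤ ‖1 - q ^ (n + 1)‖ := by
      have h1 := norm_sub_norm_le (1 : ℂ) (q ^ (n + 1))
      simp only [norm_one, norm_pow] at h1
      have h2 : ‖q‖ ^ (n + 1) ≤ ‖q‖ :=
        pow_le_of_le_one (norm_nonneg q) hq.le (Nat.succ_ne_zero n)
      linarith
    rw [P_succ, norm_mul, div_mul_eq_div_div]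
    calc c ^ n / ‖P q n‖ / ‖1 - q ^ (n + 1)‖
        ≤ c ^ n / ‖P q n‖ / (1 - ‖q‖) := by
          gcongr
      _ = (1 - ‖q‖)⁻¹ * (c ^ n / ‖P q n‖) := by ring
  · exact (summable_normed hq hc0 hc).mul_left _

lemma F_sub_one_bound {q : ℂ} (hq : ‖q‖ < 1) {z w : ℂ} (hz : ‖z‖ < 1) (hw : ‖w‖ ≤ ‖z‖) :
    ‖F q w - 1‖ ≤ ‖w‖ * ∑' n : ℕ, ‖z‖ ^ n / ‖P q (n + 1)‖ := by
  have hw1 : ‖w‖ < 1 := lt_of_le_of_lt hw hz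
  have hs := summable_F hq hw1
  have hF : F q w - 1 = ∑' n : ℕ, w ^ (n + 1) / P q (n + 1) := by
    rw [F, Summable.tsum_eq_zero_add hs]
    simp [P]
  rw [hF]
  have hnorm : Summable (fun n : ℕ => ‖w ^ (n + 1) / P q (n + 1)‖) := by
    have h1 := (summable_nat_add_iff 1).mpr (summable_normed hq (norm_nonneg w) hw1)
    apply h1.congr
    intro n
    simp [norm_div, norm_pow]
  have hsn := summable_shifted hq (norm_nonneg z) hz
  calc ‖∑' n : ℕ, w ^ (n + 1) / P q (n + 1)‖
      ≤ ∑' n : ℕ, ‖w ^ (n + 1) / P q (n + 1)‖ := norm_tsum_le_tsum_norm hnorm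
    _ ≤ ∑' n : ℕ, ‖w‖ * (‖z‖ ^ n / ‖P q (n + 1)‖) := by
        apply Summable.tsum_le_tsum _ hnorm (hsn.mul_left _)
        intro n
        rw [norm_div, norm_pow, pow_succ, mul_comm (‖w‖ ^ n) ‖w‖, mul_div_assoc]
        gcongr
    _ = ‖w‖ * ∑' n : ℕ, ‖z‖ ^ n / ‖P q (n + 1)‖ := tsum_mul_left


lemma tendsto_F_one {q z : ℂ} (hq : ‖q‖ < 1) (hz : ‖z‖ < 1) :
    Tendsto (fun N : ℕ => F q (q ^ N * z)) atTop (𝓝 1) := by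
  rw [tendsto_iff_norm_sub_tendsto_zero]
  set C := ∑' n : ℕ, ‖z‖ ^ n / ‖P q (n + 1)‖ with hC
  apply squeeze_zero (fun N => norm_nonneg _)
    (g := fun N => ‖q‖ ^ N * (‖z‖ * C))
  · intro N
    have hb := F_sub_one_bound hq hz (w := q ^ N * z) (by
      rw [norm_mul, norm_pow]
      calc ‖q‖ ^ N * ‖z‖ ≤ 1 * ‖z‖ := by
            gcongr
            exact pow_le_one₀ (norm_nonneg q) hq.le
        _ = ‖z‖ := one_mul _)
    calc ‖F q (q ^ N * z) - 1‖ ≤ ‖q ^ N * z‖ * C := hb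
      _ = ‖q‖ ^ N * (‖z‖ * C) := by rw [norm_mul, norm_pow]; ring
  · have := (tendsto_pow_atTop_nhds_zero_of_lt_one (norm_nonneg q) hq).mul_const (‖z‖ * C)
    simpa using this

lemma multipliable_aux {q z : ℂ} (hq : ‖q‖ < 1) (hz : ‖z‖ < 1) :
    Multipliable (fun j : ℕ => 1 - z * q ^ j) := by
  have hne : ∀ j : ℕ, (1 : ℂ) - z * q ^ j ≠ 0 := by
    intro j
    apply one_sub_ne
    rw [norm_mul, norm_pow]
    calc ‖z‖ * ‖q‖ ^ j ≤ ‖z‖ * 1 := by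
          gcongr
          exact pow_le_one₀ (norm_nonneg q) hq.le
      _ < 1 := by simpa using hz
  apply Complex.multipliable_of_summable_log (f := fun j : ℕ => 1 - z * q ^ j)
  have hgeo : Summable (fun j : ℕ => 3 / 2 * (‖z‖ * ‖q‖ ^ j)) :=
    ((summable_geometric_of_lt_one (norm_nonneg q) hq).mul_left ‖z‖).mul_left _
  apply hgeo.of_norm_bounded_eventually_nat
  have htend : Tendsto (fun j : ℕ => ‖z * q ^ j‖) atTop (𝓝 0) := by
    have := (tendsto_pow_atTop_nhds_zero_of_norm_lt_one (x := q) hq).const_mul z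
    rw [mul_zero] at this
    exact (tendsto_zero_iff_norm_tendsto_zero.mp this)
  filter_upwards [htend.eventually_le_const (by norm_num : (0:ℝ) < 1/2)] with j hj
  have hlog : ‖Complex.log (1 + -(z * q ^ j))‖ ≤ 3 / 2 * ‖-(z * q ^ j)‖ :=
    Complex.norm_log_one_add_half_le_self (by rwa [norm_neg])
  rw [norm_neg, norm_mul, norm_pow] at hlog
  have heq : (1 : ℂ) + -(z * q ^ j) = 1 - z * q ^ j := by ring
  rw [heq] at hlog
  exact hlog

end EulerAux

open EulerAux in
/-- Euler's identity: for `|q| < 1` and `|z| < 1`,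
`∑_{n ≥ 0} z^n / (q)_n = 1 / (z; q)_∞`, where `(q)_n = ∏_{j=1}^n (1 - q^j)`
and `(z; q)_∞ = ∏_{j ≥ 0} (1 - z q^j)`. -/
theorem euler_identity_inv (q z : ℂ) (hq : ‖q‖ < 1) (hz : ‖z‖ < 1) :
    ∑' n : ℕ, z ^ n / ∏ j ∈ Finset.range n, (1 - q ^ (j + 1))
    = (∏' j : ℕ, (1 - z * q ^ j))⁻¹ := by
  have hmul := multipliable_aux hq hz
  have h1 : Tendsto (fun N : ℕ => F q z * ∏ j ∈ Finset.range N, (1 - z * q ^ j)) atTop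
      (𝓝 (F q z * ∏' j : ℕ, (1 - z * q ^ j))) :=
    hmul.hasProd.tendsto_prod_nat.const_mul (F q z)
  have h2 : Tendsto (fun N : ℕ => F q z * ∏ j ∈ Finset.range N, (1 - z * q ^ j)) atTop (𝓝 1) := by
    have := tendsto_F_one hq hz
    apply this.congr
    intro N
    exact (iterate_eq hq hz N).symm
  have hkey : F q z * ∏' j : ℕ, (1 - z * q ^ j) = 1 := tendsto_nhds_unique h1 h2
  show F q z = _
  rw [mul_comm] at hkey
  exact eq_inv_of_mul_eq_one_right hkey
end

section
/- Euler's identity: ∑_{n≥0} q^{n(n+1)/2} z^n / (q)_n = ∏_{j≥1}(1 + z q^j) as formal power series in q and z. -/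
open Finset Filter Topology

noncomputable def eulerA (q : ℂ) (n : ℕ) : ℂ :=
  q ^ (n * (n + 1) / 2) / ∏ j ∈ Finset.range n, (1 - q ^ (j + 1))

noncomputable def eulerS (q z : ℂ) : ℂ := ∑' n : ℕ, eulerA q n * z ^ n

lemma euler_D_ne (q : ℂ) (hq : ‖q‖ < 1) (n : ℕ) : (1 : ℂ) - q ^ (n + 1) ≠ 0 := by
  have h : ‖q ^ (n + 1)‖ < 1 := by
    rw [norm_pow]
    exact pow_lt_one₀ (norm_nonneg q) hq (Nat.succ_ne_zero n)
  intro h0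
  have h1 : (1 : ℂ) = q ^ (n + 1) := sub_eq_zero.mp h0
  rw [← h1] at h; simp at h

lemma eulerA_zero (q : ℂ) : eulerA q 0 = 1 := by simp [eulerA]

lemma eulerA_succ (q : ℂ) (hq : ‖q‖ < 1) (n : ℕ) :
    eulerA q (n + 1) = eulerA q n * q ^ (n + 1) / (1 - q ^ (n + 1)) := by
  have hT : (n + 1) * (n + 1 + 1) / 2 = n * (n + 1) / 2 + (n + 1) := by
    have h2 : (n + 1) * (n + 1 + 1) = n * (n + 1) + 2 * (n + 1) := by ring
    omega
  rw [eulerA, eulerA, hT, pow_add, Finset.prod_range_succ, mul_div_mul_comm, mul_div_assoc]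

lemma eulerA_key (q : ℂ) (hq : ‖q‖ < 1) (n : ℕ) :
    eulerA q (n + 1) * (1 - q ^ (n + 1)) = eulerA q n * q ^ (n + 1) := by
  rw [eulerA_succ q hq n, div_mul_cancel₀ _ (euler_D_ne q hq n)]

lemma euler_summable (q : ℂ) (hq : ‖q‖ < 1) (w : ℂ) :
    Summable fun n : ℕ => ‖eulerA q n * w ^ n‖ := by
  apply summable_of_ratio_norm_eventually_le (r := 1/2) (by norm_num)
  have h0 : Tendsto (fun n : ℕ => ‖q‖ ^ (n + 1) * ‖w‖) atTop (𝓝 0) := by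
    simpa using ((tendsto_pow_atTop_nhds_zero_of_norm_lt_one
      (by simpa using hq)).comp (tendsto_add_atTop_nat 1)).mul_const ‖w‖
  filter_upwards [h0.eventually_le_const (show (0:ℝ) < (1 - ‖q‖)/2 by linarith)] with n hn
  have hD : (1 : ℝ) - ‖q‖ ≤ ‖1 - q ^ (n + 1)‖ := by
    have h1 : ‖q‖ ^ (n+1) ≤ ‖q‖ := by
      have := pow_le_pow_of_le_one (norm_nonneg q) hq.le (show 1 ≤ n+1 by omega)
      rwa [pow_one] at this
    have h2 : ‖(1:ℂ)‖ - ‖q ^ (n+1)‖ ≤ ‖1 - q ^ (n+1)‖ := norm_sub_norm_le _ _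
    rw [norm_one, norm_pow] at h2
    linarith
  have heq : eulerA q (n+1) * w ^ (n+1) =
      (eulerA q n * w ^ n) * (q ^ (n+1) * w / (1 - q ^ (n+1))) := by
    rw [eulerA_succ q hq n]; ring
  rw [norm_norm, norm_norm, heq, norm_mul]
  have hfrac : ‖q ^ (n+1) * w / (1 - q ^ (n+1))‖ ≤ 1/2 := by
    rw [norm_div, norm_mul, norm_pow]
    rw [div_le_iff₀ (by linarith [norm_nonneg (1 - q^(n+1))] : (0:ℝ) < ‖1 - q^(n+1)‖)]
    · calc ‖q‖ ^ (n+1) * ‖w‖ ≤ (1 - ‖q‖)/2 := hn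
        _ ≤ 1/2 * ‖1 - q^(n+1)‖ := by linarith
  calc ‖eulerA q n * w ^ n‖ * ‖q ^ (n+1) * w / (1 - q ^ (n+1))‖
      ≤ ‖eulerA q n * w ^ n‖ * (1/2) :=
        mul_le_mul_of_nonneg_left hfrac (norm_nonneg _)
    _ = 1/2 * ‖eulerA q n * w ^ n‖ := by ring

lemma euler_funeq (q : ℂ) (hq : ‖q‖ < 1) (w : ℂ) :
    eulerS q w = (1 + q * w) * eulerS q (q * w) := by
  have hsw : Summable fun n : ℕ => eulerA q n * w ^ n :=
    (euler_summable q hq w).of_norm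
  have hsqw : Summable fun n : ℕ => eulerA q n * (q * w) ^ n :=
    (euler_summable q hq (q * w)).of_norm
  have hterm : ∀ n : ℕ, eulerA q (n+1) * w ^ (n+1) =
      eulerA q (n+1) * (q*w) ^ (n+1) + (q*w) * (eulerA q n * (q*w) ^ n) := by
    intro n
    have key := eulerA_key q hq n
    linear_combination w ^ (n+1) * key
  have h1 : eulerS q w = eulerA q 0 + ∑' n : ℕ, eulerA q (n+1) * w ^ (n+1) := by
    rw [eulerS, tsum_eq_zero_add' ((summable_nat_add_iff 1).2 hsw)]; simp
  have hs1 : Summable fun n : ℕ => eulerA q (n+1) * (q*w) ^ (n+1) := by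
    have h := (summable_nat_add_iff (f := fun n : ℕ => eulerA q n * (q*w) ^ n) 1).2 hsqw
    exact h
  have hs2 : Summable fun n : ℕ => (q*w) * (eulerA q n * (q*w) ^ n) :=
    hsqw.mul_left _
  rw [h1, tsum_congr hterm, Summable.tsum_add hs1 hs2, tsum_mul_left]
  have h2 : eulerS q (q*w) = eulerA q 0 + ∑' n : ℕ, eulerA q (n+1) * (q*w) ^ (n+1) := by
    rw [eulerS, tsum_eq_zero_add' ((summable_nat_add_iff 1).2 hsqw)]; simp
  have h3 : (∑' n : ℕ, eulerA q (n+1) * (q*w) ^ (n+1)) = eulerS q (q*w) - eulerA q 0 := by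
    rw [h2]; ring
  rw [h3, ← eulerS]
  ring

lemma euler_iter (q z : ℂ) (hq : ‖q‖ < 1) (N : ℕ) :
    eulerS q z = (∏ j ∈ Finset.range N, (1 + z * q ^ (j + 1))) * eulerS q (q ^ N * z) := by
  induction N with
  | zero => simp
  | succ N ih =>
    rw [ih, euler_funeq q hq (q ^ N * z), Finset.prod_range_succ]
    have e1 : (1 : ℂ) + q * (q ^ N * z) = 1 + z * q ^ (N + 1) := by ring
    have e2 : q * (q ^ N * z) = q ^ (N + 1) * z := by ring
    rw [e1, e2]; ring

lemma euler_tendsto_one (q z : ℂ) (hq : ‖q‖ < 1) :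
    Tendsto (fun N : ℕ => eulerS q (q ^ N * z)) atTop (𝓝 1) := by
  have hM : Summable fun n : ℕ => ‖eulerA q (n+1)‖ := by
    have h := (summable_nat_add_iff (f := fun n : ℕ => ‖eulerA q n * (1:ℂ) ^ n‖) 1).2
      (euler_summable q hq 1)
    simpa using h
  set M : ℝ := ∑' n : ℕ, ‖eulerA q (n+1)‖ with hMdef
  have hbound : ∀ u : ℂ, ‖u‖ ≤ 1 → ‖eulerS q u - 1‖ ≤ ‖u‖ * M := by
    intro u hu
    have hsu : Summable fun n : ℕ => eulerA q n * u ^ n :=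
      (euler_summable q hq u).of_norm
    have h1 : eulerS q u - 1 = ∑' n : ℕ, eulerA q (n+1) * u ^ (n+1) := by
      rw [eulerS, tsum_eq_zero_add' ((summable_nat_add_iff 1).2 hsu)]; simp [eulerA_zero]
    rw [h1]
    have hsn : Summable fun n : ℕ => ‖eulerA q (n+1) * u ^ (n+1)‖ := by
      have h := (summable_nat_add_iff (f := fun n : ℕ => ‖eulerA q n * u ^ n‖) 1).2
        (euler_summable q hq u)
      exact h
    calc ‖∑' n : ℕ, eulerA q (n+1) * u ^ (n+1)‖
        ≤ ∑' n : ℕ, ‖eulerA q (n+1) * u ^ (n+1)‖ := norm_tsum_le_tsum_norm hsn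
      _ ≤ ∑' n : ℕ, ‖eulerA q (n+1)‖ * ‖u‖ := by
          apply Summable.tsum_le_tsum _ hsn (hM.mul_right ‖u‖)
          intro n
          rw [norm_mul, norm_pow]
          refine mul_le_mul_of_nonneg_left ?_ (norm_nonneg _)
          calc ‖u‖ ^ (n+1) ≤ ‖u‖ ^ 1 :=
                pow_le_pow_of_le_one (norm_nonneg u) hu (by omega)
            _ = ‖u‖ := pow_one _
      _ = ‖u‖ * M := by rw [tsum_mul_right, hMdef, mul_comm]
  have h0 : Tendsto (fun N : ℕ => ‖q ^ N * z‖ * M) atTop (𝓝 0) := by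
    have : Tendsto (fun N : ℕ => q ^ N * z) atTop (𝓝 0) := by
      simpa using (tendsto_pow_atTop_nhds_zero_of_norm_lt_one hq).mul_const z
    simpa using (this.norm.mul_const M)
  have hev : ∀ᶠ N : ℕ in atTop, ‖eulerS q (q ^ N * z) - 1‖ ≤ ‖q ^ N * z‖ * M := by
    have hto : Tendsto (fun N : ℕ => ‖q ^ N * z‖) atTop (𝓝 0) := by
      have : Tendsto (fun N : ℕ => q ^ N * z) atTop (𝓝 0) := by
        simpa using (tendsto_pow_atTop_nhds_zero_of_norm_lt_one hq).mul_const z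
      simpa using this.norm
    filter_upwards [hto.eventually_le_const (show (0:ℝ) < 1 by norm_num)] with N hN
    exact hbound _ hN
  have : Tendsto (fun N : ℕ => eulerS q (q ^ N * z) - 1) atTop (𝓝 0) :=
    squeeze_zero_norm' hev h0
  have := this.add_const 1
  simpa using this

lemma euler_multipliable (q z : ℂ) (hq : ‖q‖ < 1) :
    Multipliable fun j : ℕ => 1 + z * q ^ (j + 1) := by
  by_cases hzero : ∃ j0 : ℕ, 1 + z * q ^ (j0 + 1) = 0
  · obtain ⟨j0, hj0⟩ := hzero
    refine ⟨0, ?_⟩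
    have hev : ∀ᶠ s : Finset ℕ in atTop, ∏ i ∈ s, (1 + z * q ^ (i + 1)) = 0 := by
      filter_upwards [eventually_ge_atTop {j0}] with s hs
      exact Finset.prod_eq_zero (hs (Finset.mem_singleton_self j0)) hj0
    exact tendsto_const_nhds.congr' (hev.mono fun s h => h.symm)
  · push_neg at hzero
    have hlog : Summable fun j : ℕ => Complex.log (1 + z * q ^ (j + 1)) := by
      have hgeo : Summable fun j : ℕ => 3/2 * (‖z‖ * ‖q‖ ^ (j + 1)) := by
        have : Summable fun j : ℕ => ‖q‖ ^ (j + 1) := by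
          have h := (summable_nat_add_iff (f := fun j : ℕ => ‖q‖ ^ j) 1).2
            (summable_geometric_of_lt_one (norm_nonneg q) hq)
          exact h
        exact ((this.mul_left ‖z‖).mul_left _)
      apply Summable.of_norm_bounded_eventually_nat hgeo
      have hto : Tendsto (fun j : ℕ => ‖z * q ^ (j + 1)‖) atTop (𝓝 0) := by
        have : Tendsto (fun j : ℕ => q ^ (j+1)) atTop (𝓝 0) :=
          (tendsto_pow_atTop_nhds_zero_of_norm_lt_one hq).comp (tendsto_add_atTop_nat 1)
        simpa using ((this.const_mul z).norm)
      filter_upwards [hto.eventually_le_const (show (0:ℝ) < 1/2 by norm_num)] with j hj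
      calc ‖Complex.log (1 + z * q ^ (j + 1))‖ ≤ 3/2 * ‖z * q ^ (j + 1)‖ :=
            Complex.norm_log_one_add_half_le_self hj
        _ = 3/2 * (‖z‖ * ‖q‖ ^ (j + 1)) := by rw [norm_mul, norm_pow]
    exact Complex.multipliable_of_summable_log hlog

/-- Euler's identity: for `|q| < 1`,
`∑_{n ≥ 0} q^{n(n+1)/2} z^n / (q)_n = ∏_{j ≥ 1} (1 + z q^j)`,
where `(q)_n = ∏_{j=1}^n (1 - q^j)`. -/
theorem euler_identity_tri (q z : ℂ) (hq : ‖q‖ < 1) :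
    ∑' n : ℕ, q ^ (n * (n + 1) / 2) * z ^ n / ∏ j ∈ Finset.range n, (1 - q ^ (j + 1))
    = ∏' j : ℕ, (1 + z * q ^ (j + 1)) := by
  have hS : (∑' n : ℕ, q ^ (n * (n + 1) / 2) * z ^ n / ∏ j ∈ Finset.range n, (1 - q ^ (j + 1)))
      = eulerS q z := by
    rw [eulerS]
    apply tsum_congr
    intro n
    rw [eulerA, div_mul_eq_mul_div]
  rw [hS]
  have hmul := euler_multipliable q z hq
  have h1 : Tendsto (fun N : ℕ => ∏ j ∈ Finset.range N, (1 + z * q ^ (j + 1))) atTop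
      (𝓝 (∏' j : ℕ, (1 + z * q ^ (j + 1)))) := hmul.hasProd.tendsto_prod_nat
  have h2 := euler_tendsto_one q z hq
  have h3 : Tendsto (fun N : ℕ =>
      (∏ j ∈ Finset.range N, (1 + z * q ^ (j + 1))) * eulerS q (q ^ N * z)) atTop
      (𝓝 ((∏' j : ℕ, (1 + z * q ^ (j + 1))) * 1)) := h1.mul h2
  have h4 : Tendsto (fun _ : ℕ => eulerS q z) atTop
      (𝓝 ((∏' j : ℕ, (1 + z * q ^ (j + 1))) * 1)) := by
    refine h3.congr fun N => (euler_iter q z hq N).symm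
  have := tendsto_nhds_unique h4 tendsto_const_nhds
  rw [← this, mul_one]
end

section
/- For integers 0 ≤ i, j, k, l < m, the rational function ρ_2(i,j,k,l,q) := [∑ over the four choices of one variable x ∈ {i,j,k,l} of q^{m-x}(1-q^x)/(1-q^{m-x})] - [∑ over the four choices of three variables x,y,z from {i,j,k,l} of q^{2m-x-y-z}(1-q^x)(1-q^y)(1-q^z)/((1-q^{m-x})(1-q^{m-y})(1-q^{m-z}))] + (1+q^m)[1 - (1-q^i)(1-q^j)(1-q^k)(1-q^l)/((1-q^{m-i})(1-q^{m-j})(1-q^{m-k})(1-q^{m-l}))] equals (q^{2m} - q^{i+j+k+l})·[(1+q^m)(1-q^i)(1-q^j)(1-q^k)(1-q^l) - (1-q^m)^3] / ((q^m-q^i)(q^m-q^j)(q^m-q^k)(q^m-q^l)). -/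
set_option maxHeartbeats 4000000


/-- For `0 ≤ i, j, k, l < m`, the rational function `ρ₂(i,j,k,l,q)` equals
`(q^{2m} - q^{i+j+k+l})·[(1+q^m)(1-q^i)(1-q^j)(1-q^k)(1-q^l) - (1-q^m)³]
  / ((q^m-q^i)(q^m-q^j)(q^m-q^k)(q^m-q^l))`. -/
theorem rho2_closed_form {K : Type*} [Field K] (q : K) (i j k l m : ℕ)
    (hi : i < m) (hj : j < m) (hk : k < m) (hl : l < m) (hq : q ≠ 0)
    (hdi : 1 - q ^ (m - i) ≠ 0) (hdj : 1 - q ^ (m - j) ≠ 0)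
    (hdk : 1 - q ^ (m - k) ≠ 0) (hdl : 1 - q ^ (m - l) ≠ 0)
    (hei : q ^ m ≠ q ^ i) (hej : q ^ m ≠ q ^ j)
    (hek : q ^ m ≠ q ^ k) (hel : q ^ m ≠ q ^ l) :
    (q ^ (m - i) * (1 - q ^ i) / (1 - q ^ (m - i))
      + q ^ (m - j) * (1 - q ^ j) / (1 - q ^ (m - j))
      + q ^ (m - k) * (1 - q ^ k) / (1 - q ^ (m - k))
      + q ^ (m - l) * (1 - q ^ l) / (1 - q ^ (m - l)))
    - (q ^ (2 * (m : ℤ) - i - j - k) * (1 - q ^ i) * (1 - q ^ j) * (1 - q ^ k) /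
          ((1 - q ^ (m - i)) * (1 - q ^ (m - j)) * (1 - q ^ (m - k)))
      + q ^ (2 * (m : ℤ) - i - j - l) * (1 - q ^ i) * (1 - q ^ j) * (1 - q ^ l) /
          ((1 - q ^ (m - i)) * (1 - q ^ (m - j)) * (1 - q ^ (m - l)))
      + q ^ (2 * (m : ℤ) - i - k - l) * (1 - q ^ i) * (1 - q ^ k) * (1 - q ^ l) /
          ((1 - q ^ (m - i)) * (1 - q ^ (m - k)) * (1 - q ^ (m - l)))
      + q ^ (2 * (m : ℤ) - j - k - l) * (1 - q ^ j) * (1 - q ^ k) * (1 - q ^ l) /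
          ((1 - q ^ (m - j)) * (1 - q ^ (m - k)) * (1 - q ^ (m - l))))
    + (1 + q ^ m) *
        (1 - (1 - q ^ i) * (1 - q ^ j) * (1 - q ^ k) * (1 - q ^ l) /
          ((1 - q ^ (m - i)) * (1 - q ^ (m - j)) * (1 - q ^ (m - k)) * (1 - q ^ (m - l))))
    = (q ^ (2 * m) - q ^ (i + j + k + l)) *
        ((1 + q ^ m) * (1 - q ^ i) * (1 - q ^ j) * (1 - q ^ k) * (1 - q ^ l)
          - (1 - q ^ m) ^ 3) /
        ((q ^ m - q ^ i) * (q ^ m - q ^ j) * (q ^ m - q ^ k) * (q ^ m - q ^ l)) := by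
  have hpow : ∀ x : ℕ, x < m → q ^ (m - x) = q ^ m / q ^ x := by
    intro x hx
    rw [eq_div_iff (pow_ne_zero _ hq), ← pow_add, Nat.sub_add_cancel hx.le]
  have h2m : (2 * (m : ℤ)) = ((2 * m : ℕ) : ℤ) := by push_cast; ring
  have e2m : q ^ (2 * m) = q ^ m * q ^ m := by rw [two_mul, pow_add]
  have eijkl : q ^ (i + j + k + l) = q ^ i * q ^ j * q ^ k * q ^ l := by
    rw [pow_add, pow_add, pow_add]
  have hqi : q ^ i ≠ 0 := pow_ne_zero _ hq
  have hqj : q ^ j ≠ 0 := pow_ne_zero _ hq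
  have hqk : q ^ k ≠ 0 := pow_ne_zero _ hq
  have hql : q ^ l ≠ 0 := pow_ne_zero _ hq
  have hsi : q ^ m - q ^ i ≠ 0 := sub_ne_zero.mpr hei
  have hsj : q ^ m - q ^ j ≠ 0 := sub_ne_zero.mpr hej
  have hsk : q ^ m - q ^ k ≠ 0 := sub_ne_zero.mpr hek
  have hsl : q ^ m - q ^ l ≠ 0 := sub_ne_zero.mpr hel
  rw [hpow i hi] at hdi
  rw [hpow j hj] at hdj
  rw [hpow k hk] at hdk
  rw [hpow l hl] at hdl
  rw [hpow i hi, hpow j hj, hpow k hk, hpow l hl]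
  simp only [zpow_sub₀ hq, h2m, zpow_natCast, e2m, eijkl]
  clear hpow h2m e2m eijkl hq hi hj hk hl hei hej hek hel
  generalize q ^ m = e at *
  generalize q ^ i = a at *
  generalize q ^ j = b at *
  generalize q ^ k = c at *
  generalize q ^ l = d at *
  have hdi' : a - e ≠ 0 := sub_ne_zero.mpr fun h => hdi (by rw [← h, div_self hqi, sub_self])
  have hdj' : b - e ≠ 0 := sub_ne_zero.mpr fun h => hdj (by rw [← h, div_self hqj, sub_self])
  have hdk' : c - e ≠ 0 := sub_ne_zero.mpr fun h => hdk (by rw [← h, div_self hqk, sub_self])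
  have hdl' : d - e ≠ 0 := sub_ne_zero.mpr fun h => hdl (by rw [← h, div_self hql, sub_self])
  have r1 : ∀ x : K, x ≠ 0 → x - e ≠ 0 →
      e / x * (1 - x) / (1 - e / x) = e * (1 - x) / (x - e) := by
    intro x hx hxe
    field_simp
  have r3 : ∀ x y z : K, x ≠ 0 → y ≠ 0 → z ≠ 0 → x - e ≠ 0 → y - e ≠ 0 → z - e ≠ 0 →
      e * e / x / y / z * (1 - x) * (1 - y) * (1 - z) / ((1 - e / x) * (1 - e / y) * (1 - e / z))
        = e * e * (1 - x) * (1 - y) * (1 - z) / ((x - e) * (y - e) * (z - e)) := by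
    intro x y z hx hy hz hxe hye hze
    field_simp
  have r4 : (1 - a) * (1 - b) * (1 - c) * (1 - d) /
        ((1 - e / a) * (1 - e / b) * (1 - e / c) * (1 - e / d))
      = a * b * c * d * ((1 - a) * (1 - b) * (1 - c) * (1 - d)) /
        ((a - e) * ((b - e) * ((c - e) * (d - e)))) := by
    field_simp
  have rden : (e - a) * (e - b) * (e - c) * (e - d)
      = (a - e) * ((b - e) * ((c - e) * (d - e))) := by ring
  rw [r1 a hqi hdi', r1 b hqj hdj', r1 c hqk hdk', r1 d hql hdl',
    r3 a b c hqi hqj hqk hdi' hdj' hdk', r3 a b d hqi hqj hql hdi' hdj' hdl',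
    r3 a c d hqi hqk hql hdi' hdk' hdl', r3 b c d hqj hqk hql hdj' hdk' hdl',
    r4, rden]
  have hD : (a - e) * ((b - e) * ((c - e) * (d - e))) ≠ 0 :=
    mul_ne_zero hdi' (mul_ne_zero hdj' (mul_ne_zero hdk' hdl'))
  have t1 : e * (1 - a) / (a - e)
      = e * (1 - a) * ((b - e) * ((c - e) * (d - e))) /
        ((a - e) * ((b - e) * ((c - e) * (d - e)))) := by
    rw [div_eq_div_iff hdi' hD]; ring
  have t2 : e * (1 - b) / (b - e)
      = e * (1 - b) * ((a - e) * ((c - e) * (d - e))) /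
        ((a - e) * ((b - e) * ((c - e) * (d - e)))) := by
    rw [div_eq_div_iff hdj' hD]; ring
  have t3 : e * (1 - c) / (c - e)
      = e * (1 - c) * ((a - e) * ((b - e) * (d - e))) /
        ((a - e) * ((b - e) * ((c - e) * (d - e)))) := by
    rw [div_eq_div_iff hdk' hD]; ring
  have t4 : e * (1 - d) / (d - e)
      = e * (1 - d) * ((a - e) * ((b - e) * (c - e))) /
        ((a - e) * ((b - e) * ((c - e) * (d - e)))) := by
    rw [div_eq_div_iff hdl' hD]; ring
  have t5 : e * e * (1 - a) * (1 - b) * (1 - c) / ((a - e) * (b - e) * (c - e))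
      = e * e * (1 - a) * (1 - b) * (1 - c) * (d - e) /
        ((a - e) * ((b - e) * ((c - e) * (d - e)))) := by
    rw [div_eq_div_iff (mul_ne_zero (mul_ne_zero hdi' hdj') hdk') hD]; ring
  have t6 : e * e * (1 - a) * (1 - b) * (1 - d) / ((a - e) * (b - e) * (d - e))
      = e * e * (1 - a) * (1 - b) * (1 - d) * (c - e) /
        ((a - e) * ((b - e) * ((c - e) * (d - e)))) := by
    rw [div_eq_div_iff (mul_ne_zero (mul_ne_zero hdi' hdj') hdl') hD]; ring
  have t7 : e * e * (1 - a) * (1 - c) * (1 - d) / ((a - e) * (c - e) * (d - e))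
      = e * e * (1 - a) * (1 - c) * (1 - d) * (b - e) /
        ((a - e) * ((b - e) * ((c - e) * (d - e)))) := by
    rw [div_eq_div_iff (mul_ne_zero (mul_ne_zero hdi' hdk') hdl') hD]; ring
  have t8 : e * e * (1 - b) * (1 - c) * (1 - d) / ((b - e) * (c - e) * (d - e))
      = e * e * (1 - b) * (1 - c) * (1 - d) * (a - e) /
        ((a - e) * ((b - e) * ((c - e) * (d - e)))) := by
    rw [div_eq_div_iff (mul_ne_zero (mul_ne_zero hdj' hdk') hdl') hD]; ring
  have h9 : (1 : K) - a * b * c * d * ((1 - a) * (1 - b) * (1 - c) * (1 - d)) /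
        ((a - e) * ((b - e) * ((c - e) * (d - e))))
      = ((a - e) * ((b - e) * ((c - e) * (d - e)))
          - a * b * c * d * ((1 - a) * (1 - b) * (1 - c) * (1 - d))) /
        ((a - e) * ((b - e) * ((c - e) * (d - e)))) := by
    rw [sub_div, div_self hD]
  rw [t1, t2, t3, t4, t5, t6, t7, t8, h9, ← mul_div_assoc]
  rw [← add_div, ← add_div, ← add_div, ← add_div,
    ← add_div, ← add_div, div_sub_div_same, ← add_div]
  congr 1
  ring
end

section
/- For integers 0 ≤ i, j, k, l < m with i + j + k + l = 2m, the expression ρ_2(i,j,k,l,q) (defined as the symmetric sum of four 'single' terms q^{m-x}(1-q^x)/(1-q^{m-x}), minus the four 'triple' terms q^{2m-x-y-z}(1-q^x)(1-q^y)(1-q^z)/((1-q^{m-x})(1-q^{m-y})(1-q^{m-z})), plus (1+q^m)[1 - ∏_{x∈{i,j,k,l}}(1-q^x)/(1-q^{m-x})]) is identically zero. -/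
/-- For `0 ≤ i, j, k, l < m` with `i + j + k + l = 2m`, the expression
`ρ₂(i,j,k,l,q)` vanishes identically. -/
theorem rho2_eq_zero {K : Type*} [Field K] (q : K) (i j k l m : ℕ)
    (hi : i < m) (hj : j < m) (hk : k < m) (hl : l < m)
    (hsum : i + j + k + l = 2 * m)
    (hdi : 1 - q ^ (m - i) ≠ 0) (hdj : 1 - q ^ (m - j) ≠ 0)
    (hdk : 1 - q ^ (m - k) ≠ 0) (hdl : 1 - q ^ (m - l) ≠ 0) :
    (q ^ (m - i) * (1 - q ^ i) / (1 - q ^ (m - i))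
      + q ^ (m - j) * (1 - q ^ j) / (1 - q ^ (m - j))
      + q ^ (m - k) * (1 - q ^ k) / (1 - q ^ (m - k))
      + q ^ (m - l) * (1 - q ^ l) / (1 - q ^ (m - l)))
    - (q ^ (2 * m - i - j - k) * (1 - q ^ i) * (1 - q ^ j) * (1 - q ^ k) /
          ((1 - q ^ (m - i)) * (1 - q ^ (m - j)) * (1 - q ^ (m - k)))
      + q ^ (2 * m - i - j - l) * (1 - q ^ i) * (1 - q ^ j) * (1 - q ^ l) /
          ((1 - q ^ (m - i)) * (1 - q ^ (m - j)) * (1 - q ^ (m - l)))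
      + q ^ (2 * m - i - k - l) * (1 - q ^ i) * (1 - q ^ k) * (1 - q ^ l) /
          ((1 - q ^ (m - i)) * (1 - q ^ (m - k)) * (1 - q ^ (m - l)))
      + q ^ (2 * m - j - k - l) * (1 - q ^ j) * (1 - q ^ k) * (1 - q ^ l) /
          ((1 - q ^ (m - j)) * (1 - q ^ (m - k)) * (1 - q ^ (m - l))))
    + (1 + q ^ m) *
        (1 - (1 - q ^ i) * (1 - q ^ j) * (1 - q ^ k) * (1 - q ^ l) /
          ((1 - q ^ (m - i)) * (1 - q ^ (m - j)) * (1 - q ^ (m - k)) * (1 - q ^ (m - l))))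
    = 0 := by
  have e1 : 2 * m - i - j - k = l := by omega
  have e2 : 2 * m - i - j - l = k := by omega
  have e3 : 2 * m - i - k - l = j := by omega
  have e4 : 2 * m - j - k - l = i := by omega
  rw [e1, e2, e3, e4]
  have pow2 : ∀ x y u v : ℕ, x + y = u + v → q ^ x * q ^ y = q ^ u * q ^ v := by
    intro x y u v h
    rw [← pow_add, ← pow_add, h]
  have hA : q ^ i * q ^ (m - i) = q ^ m := by rw [← pow_add]; congr 1; omega
  have hB : q ^ j * q ^ (m - j) = q ^ m := by rw [← pow_add]; congr 1; omega
  have hC : q ^ k * q ^ (m - k) = q ^ m := by rw [← pow_add]; congr 1; omega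
  have hD : q ^ l * q ^ (m - l) = q ^ m := by rw [← pow_add]; congr 1; omega
  have hP : q ^ (m - i) * q ^ (m - j) * q ^ (m - k) * q ^ (m - l) = q ^ m * q ^ m := by
    rw [← pow_add, ← pow_add, ← pow_add, ← pow_add]; congr 1; omega
  have hP2 : q ^ i * q ^ j * q ^ k * q ^ l = q ^ m * q ^ m := by
    rw [← pow_add, ← pow_add, ← pow_add, ← pow_add]; congr 1; omega
  have hab : q ^ (m - i) * q ^ (m - j) = q ^ k * q ^ l := pow2 _ _ _ _ (by omega)
  have hac : q ^ (m - i) * q ^ (m - k) = q ^ j * q ^ l := pow2 _ _ _ _ (by omega)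
  have had : q ^ (m - i) * q ^ (m - l) = q ^ j * q ^ k := pow2 _ _ _ _ (by omega)
  have hbc : q ^ (m - j) * q ^ (m - k) = q ^ i * q ^ l := pow2 _ _ _ _ (by omega)
  have hbd : q ^ (m - j) * q ^ (m - l) = q ^ i * q ^ k := pow2 _ _ _ _ (by omega)
  have hcd : q ^ (m - k) * q ^ (m - l) = q ^ i * q ^ j := pow2 _ _ _ _ (by omega)
  have hBCD : q ^ j * q ^ k * q ^ l = q ^ m * q ^ (m - i) := by
    rw [← pow_add, ← pow_add, ← pow_add]; congr 1; omega
  have hACD : q ^ i * q ^ k * q ^ l = q ^ m * q ^ (m - j) := by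
    rw [← pow_add, ← pow_add, ← pow_add]; congr 1; omega
  have hABD : q ^ i * q ^ j * q ^ l = q ^ m * q ^ (m - k) := by
    rw [← pow_add, ← pow_add, ← pow_add]; congr 1; omega
  have hABC : q ^ i * q ^ j * q ^ k = q ^ m * q ^ (m - l) := by
    rw [← pow_add, ← pow_add, ← pow_add]; congr 1; omega
  set a := q ^ (m - i) with ha
  set b := q ^ (m - j) with hb
  set c := q ^ (m - k) with hc
  set d := q ^ (m - l) with hd
  set A := q ^ i with hAa
  set B := q ^ j with hBb
  set C := q ^ k with hCc
  set D := q ^ l with hDd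
  set Q := q ^ m with hQ
  clear_value a b c d A B C D Q
  clear ha hb hc hd hAa hBb hCc hDd hQ hi hj hk hl hsum e1 e2 e3 e4 pow2
  have key : a * (1 - A) * ((1 - b) * (1 - c) * (1 - d))
      + b * (1 - B) * ((1 - a) * (1 - c) * (1 - d))
      + c * (1 - C) * ((1 - a) * (1 - b) * (1 - d))
      + d * (1 - D) * ((1 - a) * (1 - b) * (1 - c))
      - (D * (1 - A) * (1 - B) * (1 - C) * (1 - d)
        + C * (1 - A) * (1 - B) * (1 - D) * (1 - c)
        + B * (1 - A) * (1 - C) * (1 - D) * (1 - b)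
        + A * (1 - B) * (1 - C) * (1 - D) * (1 - a))
      + (1 + Q) * ((1 - a) * (1 - b) * (1 - c) * (1 - d)
        - (1 - A) * (1 - B) * (1 - C) * (1 - D)) = 0 := by
    linear_combination
      ((-1) * D + (-1) * C + C * D + (-1) * B + B * D + B * C + (-1) * B * C * D + d + c + (-1) * c * d + b + (-1) * b * d + (-1) * b * c + b * c * d) * hA +
      ((-1) * D + (-1) * C + C * D + (-1) * A + A * D + A * C + (-1) * A * C * D + d + c + (-1) * c * d + a + (-1) * a * d + (-1) * a * c + a * c * d) * hB +
      (D + (-1) * B + B * D + (-1) * A + A * D + A * B + (-1) * A * B * D + d + b + (-1) * b * d + a + (-1) * a * d + (-1) * a * b + a * b * d) * hC +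
      (C + B + B * C + A + A * C + A * B + (-1) * A * B * C + c + b + (-1) * b * c + a + (-1) * a * c + (-1) * a * b + a * b * c) * hD +
      ((-3) + Q) * hP +
      (3 + (-1) * Q) * hP2 +
      ((-1) + (-1) * Q + 2 * d + 2 * c) * hab +
      ((-1) + (-1) * Q + 2 * d) * hac +
      ((-1) + (-1) * Q) * had +
      ((-1) + (-1) * Q + 2 * d) * hbc +
      ((-1) + (-1) * Q) * hbd +
      ((-1) + (-1) * Q) * hcd +
      ((-2)) * hBCD +
      ((-2)) * hACD +
      ((-2)) * hABD +
      ((-2)) * hABC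
  have hden : (1 - a) * (1 - b) * (1 - c) * (1 - d) ≠ 0 :=
    mul_ne_zero (mul_ne_zero (mul_ne_zero hdi hdj) hdk) hdl
  set den := (1 - a) * (1 - b) * (1 - c) * (1 - d) with hdeneq
  have t1 : a * (1 - A) / (1 - a) = a * (1 - A) * ((1 - b) * (1 - c) * (1 - d)) / den := by
    rw [div_eq_div_iff hdi hden, hdeneq]; ring
  have t2 : b * (1 - B) / (1 - b) = b * (1 - B) * ((1 - a) * (1 - c) * (1 - d)) / den := by
    rw [div_eq_div_iff hdj hden, hdeneq]; ring
  have t3 : c * (1 - C) / (1 - c) = c * (1 - C) * ((1 - a) * (1 - b) * (1 - d)) / den := by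
    rw [div_eq_div_iff hdk hden, hdeneq]; ring
  have t4 : d * (1 - D) / (1 - d) = d * (1 - D) * ((1 - a) * (1 - b) * (1 - c)) / den := by
    rw [div_eq_div_iff hdl hden, hdeneq]; ring
  have t5 : D * (1 - A) * (1 - B) * (1 - C) / ((1 - a) * (1 - b) * (1 - c))
      = D * (1 - A) * (1 - B) * (1 - C) * (1 - d) / den := by
    rw [div_eq_div_iff (mul_ne_zero (mul_ne_zero hdi hdj) hdk) hden, hdeneq]; ring
  have t6 : C * (1 - A) * (1 - B) * (1 - D) / ((1 - a) * (1 - b) * (1 - d))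
      = C * (1 - A) * (1 - B) * (1 - D) * (1 - c) / den := by
    rw [div_eq_div_iff (mul_ne_zero (mul_ne_zero hdi hdj) hdl) hden, hdeneq]; ring
  have t7 : B * (1 - A) * (1 - C) * (1 - D) / ((1 - a) * (1 - c) * (1 - d))
      = B * (1 - A) * (1 - C) * (1 - D) * (1 - b) / den := by
    rw [div_eq_div_iff (mul_ne_zero (mul_ne_zero hdi hdk) hdl) hden, hdeneq]; ring
  have t8 : A * (1 - B) * (1 - C) * (1 - D) / ((1 - b) * (1 - c) * (1 - d))
      = A * (1 - B) * (1 - C) * (1 - D) * (1 - a) / den := by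
    rw [div_eq_div_iff (mul_ne_zero (mul_ne_zero hdj hdk) hdl) hden, hdeneq]; ring
  rw [t1, t2, t3, t4, t5, t6, t7, t8]
  rw [← add_div, ← add_div, ← add_div, ← add_div,
    ← add_div, ← add_div]
  have h9 : (1 : K) - (1 - A) * (1 - B) * (1 - C) * (1 - D) / den
      = (den - (1 - A) * (1 - B) * (1 - C) * (1 - D)) / den := by
    rw [sub_div, div_self hden]
  rw [h9, ← sub_div, ← mul_div_assoc, ← add_div, div_eq_zero_iff]
  left
  linear_combination key
end

section
/- The function H(A,B,C,z) = (1/z + ABCz)·(-q²/z; q)_∞ (q²zABC; q)_∞ · ₃φ₂(-qA, -qB, -qC; q²zABC, -q²/z; q, q) satisfies the anti-symmetry H(A,B,C,z) = -H(A,B,C, -1/(ABCz)), and consequently the constant term in z of the Laurent expansion of H(A,B,C,z) is zero. -/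
open Finset

/-- Finite `q`-Pochhammer symbol `(x; q)_n = ∏_{j=0}^{n-1} (1 - x q^j)` in `ℂ`. -/
noncomputable def pochN (q x : ℂ) (n : ℕ) : ℂ :=
  ∏ j ∈ Finset.range n, (1 - x * q ^ j)

/-- Infinite `q`-Pochhammer symbol `(x; q)_∞ = ∏_{j≥0} (1 - x q^j)` in `ℂ`. -/
noncomputable def pochInf (q x : ℂ) : ℂ :=
  ∏' j : ℕ, (1 - x * q ^ j)

/-- The basic hypergeometric series
`₃φ₂(a₁,a₂,a₃; b₁,b₂; q, z) = ∑_{n≥0} (a₁;q)_n (a₂;q)_n (a₃;q)_n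
  / ((q;q)_n (b₁;q)_n (b₂;q)_n) · zⁿ`. -/
noncomputable def phi32 (q a₁ a₂ a₃ b₁ b₂ z : ℂ) : ℂ :=
  ∑' n : ℕ, (pochN q a₁ n * pochN q a₂ n * pochN q a₃ n) /
      (pochN q q n * pochN q b₁ n * pochN q b₂ n) * z ^ n

/-- The function
`H(A,B,C,z) = (1/z + ABCz)(-q²/z; q)_∞ (q²zABC; q)_∞
  ₃φ₂(-qA, -qB, -qC; q²zABC, -q²/z; q, q)`. -/
noncomputable def Hfun (q A B C z : ℂ) : ℂ :=
  (1 / z + A * B * C * z) * pochInf q (-(q ^ 2) / z) * pochInf q (q ^ 2 * z * A * B * C) *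
    phi32 q (-(q * A)) (-(q * B)) (-(q * C)) (q ^ 2 * z * A * B * C) (-(q ^ 2) / z) q


section Aux
open MeasureTheory Real

lemma coeff_zero (G : ℤ → ℂ)
    (h : ∀ z : ℂ, z ≠ 0 → HasSum (fun t : ℤ => G t * z ^ t) 0) : G 0 = 0 := by
  have hG : Summable G := by
    have := (h 1 one_ne_zero).summable
    simpa using this
  have hGnorm : Summable fun t => ‖G t‖ := summable_norm_iff.mpr hG
  set μ := volume.restrict (Set.Ioc (0:ℝ) (2*π)) with hμ
  have hmeas : ∀ t : ℤ, AEStronglyMeasurable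
      (fun θ : ℝ => G t * Complex.exp (θ * Complex.I) ^ t) μ := by
    intro t
    apply Continuous.aestronglyMeasurable
    apply continuous_const.mul
    apply Continuous.zpow₀
    · exact (Complex.continuous_ofReal.mul continuous_const).cexp
    · intro x; exact Or.inl (Complex.exp_ne_zero _)
  have hnorm1 : ∀ (t : ℤ) (θ : ℝ), ‖Complex.exp (θ * Complex.I) ^ t‖ = 1 := by
    intro t θ
    rw [norm_zpow, Complex.norm_exp_ofReal_mul_I, one_zpow]
  have hfin : (∑' t : ℤ, ∫⁻ θ : ℝ, ‖G t * Complex.exp (θ * Complex.I) ^ t‖₊ ∂μ) ≠ ⊤ := by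
    have heq : ∀ t : ℤ, (∫⁻ θ : ℝ, ‖G t * Complex.exp (θ * Complex.I) ^ t‖₊ ∂μ)
        = ‖G t‖₊ * ENNReal.ofReal (2*π) := by
      intro t
      have : ∀ θ : ℝ, (‖G t * Complex.exp (θ * Complex.I) ^ t‖₊ : ENNReal) = ‖G t‖₊ := by
        intro θ
        congr 1
        ext
        simp [nnnorm, norm_mul, hnorm1 t θ]
      rw [lintegral_congr this, lintegral_const, hμ, Measure.restrict_apply_univ,
        Real.volume_Ioc]
      norm_num
    rw [tsum_congr heq, ENNReal.tsum_mul_right]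
    apply ENNReal.mul_ne_top _ ENNReal.ofReal_ne_top
    rw [ENNReal.tsum_coe_ne_top_iff_summable]
    rw [← NNReal.summable_coe]
    simpa [coe_nnnorm] using hGnorm
  have key := integral_tsum hmeas hfin
  have hL : (∫ θ : ℝ, ∑' t : ℤ, G t * Complex.exp (θ * Complex.I) ^ t ∂μ) = 0 := by
    have : ∀ θ : ℝ, (∑' t : ℤ, G t * Complex.exp (θ * Complex.I) ^ t) = 0 := by
      intro θ
      exact (h _ (Complex.exp_ne_zero _)).tsum_eq
    simp [this]
  have hI : ∀ t : ℤ, t ≠ 0 →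
      (∫ θ : ℝ, G t * Complex.exp (θ * Complex.I) ^ t ∂μ) = 0 := by
    intro t ht
    have hc : (t : ℂ) * Complex.I ≠ 0 := by
      simp [Complex.I_ne_zero, Complex.ext_iff]
      exact_mod_cast ht
    have : (∫ θ : ℝ, Complex.exp (θ * Complex.I) ^ t ∂μ) = 0 := by
      have hrw : ∀ θ : ℝ, Complex.exp (θ * Complex.I) ^ t
          = Complex.exp ((t : ℂ) * Complex.I * θ) := by
        intro θ
        rw [← Complex.exp_int_mul]
        ring_nf
      rw [integral_congr_ae (Filter.Eventually.of_forall hrw), hμ,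
        ← intervalIntegral.integral_of_le (by positivity : (0:ℝ) ≤ 2*π),
        integral_exp_mul_complex hc]
      have h2 : (t : ℂ) * Complex.I * (2*π:ℝ) = (t : ℂ) * (2*π*Complex.I) := by
        push_cast; ring
      have h0 : (t : ℂ) * Complex.I * (0:ℝ) = 0 := by push_cast; ring
      rw [h2, h0, Complex.exp_int_mul_two_pi_mul_I, Complex.exp_zero, sub_self, zero_div]
    rw [MeasureTheory.integral_const_mul, this, mul_zero]
  have hR : (∑' t : ℤ, ∫ θ : ℝ, G t * Complex.exp (θ * Complex.I) ^ t ∂μ)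
      = (2*π : ℝ) • G 0 := by
    rw [tsum_eq_single 0 hI]
    simp only [zpow_zero, mul_one, integral_const, hμ, Measure.restrict_apply_univ,
      Real.volume_Ioc]
    rw [measureReal_def, Measure.restrict_apply_univ, Real.volume_Ioc,
      ENNReal.toReal_ofReal (by linarith [Real.pi_pos] : (0:ℝ) ≤ 2*π - 0)]
    norm_num
  rw [hL, hR] at key
  have hπ : (2*π : ℝ) ≠ 0 := by positivity
  have := key.symm
  rwa [smul_eq_zero, or_iff_right (by exact_mod_cast hπ)] at this

lemma phi32_swap (q a₁ a₂ a₃ b₁ b₂ z : ℂ) :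
    phi32 q a₁ a₂ a₃ b₁ b₂ z = phi32 q a₁ a₂ a₃ b₂ b₁ z := by
  unfold phi32
  exact tsum_congr fun n => by ring

end Aux

/-- `H` satisfies the anti-symmetry `H(A,B,C,z) = -H(A,B,C, -1/(ABCz))`, and
consequently the constant term (the coefficient of `z⁰` in any Laurent
expansion of `H` valid on `ℂ \ {0}`) vanishes. -/
theorem Hfun_antisymm_and_constant_term (q A B C : ℂ)
    (hq0 : q ≠ 0) (hq : ‖q‖ < 1) (hABC : A * B * C ≠ 0) :
    (∀ z : ℂ, z ≠ 0 → Hfun q A B C z = -Hfun q A B C (-1 / (A * B * C * z))) ∧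
    (∀ F : ℤ → ℂ, (∀ z : ℂ, z ≠ 0 →
        HasSum (fun t : ℤ => F t * z ^ t) (Hfun q A B C z)) → F 0 = 0) := by
  have hsym : ∀ z : ℂ, z ≠ 0 → Hfun q A B C z = -Hfun q A B C (-1 / (A * B * C * z)) := by
    intro z hz
    have hA : A ≠ 0 := fun h => hABC (by simp [h])
    have hB : B ≠ 0 := fun h => hABC (by simp [h])
    have hC : C ≠ 0 := fun h => hABC (by simp [h])
    have h1 : 1 / (-1 / (A * B * C * z)) + A * B * C * (-1 / (A * B * C * z))
        = -(1 / z + A * B * C * z) := by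
      field_simp
      ring
    have h2 : -(q ^ 2) / (-1 / (A * B * C * z)) = q ^ 2 * z * A * B * C := by
      field_simp
    have h3 : q ^ 2 * (-1 / (A * B * C * z)) * A * B * C = -(q ^ 2) / z := by
      field_simp
    simp only [Hfun]
    rw [h1, h2, h3, phi32_swap]
    ring
  refine ⟨hsym, ?_⟩
  intro F hF
  have hkey : ∀ z : ℂ, z ≠ 0 →
      HasSum (fun t : ℤ => (F t + F (-t) * (-(A * B * C)) ^ t) * z ^ t) 0 := by
    intro z hz
    have hA : A ≠ 0 := fun h => hABC (by simp [h])
    have hB : B ≠ 0 := fun h => hABC (by simp [h])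
    have hC : C ≠ 0 := fun h => hABC (by simp [h])
    have hcz : A * B * C * z ≠ 0 := mul_ne_zero hABC hz
    have hwne : (-1 / (A * B * C * z)) ≠ 0 := div_ne_zero (by norm_num) hcz
    have h1 := hF z hz
    have h2 := hF _ hwne
    rw [show Hfun q A B C (-1 / (A * B * C * z)) = -Hfun q A B C z from
      by rw [hsym z hz, neg_neg]] at h2
    have h3 := (Equiv.neg ℤ).hasSum_iff.mpr h2
    have hw : ∀ t : ℤ, (-1 / (A * B * C * z)) ^ (-t) = (-(A * B * C)) ^ t * z ^ t := by
      intro t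
      have hinv : (-1 / (A * B * C * z))⁻¹ = -(A * B * C) * z := by
        field_simp
      rw [zpow_neg, ← inv_zpow, hinv, mul_zpow]
    have h4 : HasSum (fun t : ℤ => F (-t) * ((-(A * B * C)) ^ t * z ^ t))
        (-Hfun q A B C z) := by
      have he : (fun t : ℤ => F (-t) * ((-(A * B * C)) ^ t * z ^ t))
          = (fun t : ℤ => F t * (-1 / (A * B * C * z)) ^ t) ∘ (Equiv.neg ℤ) := by
        funext t
        simp only [Function.comp, Equiv.neg_apply, hw t]
      rw [he]
      exact h3
    have h5 := h1.add h4
    have he2 : (fun t : ℤ => (F t + F (-t) * (-(A * B * C)) ^ t) * z ^ t)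
        = fun t : ℤ => F t * z ^ t + F (-t) * ((-(A * B * C)) ^ t * z ^ t) := by
      funext t
      ring
    rw [he2]
    simpa using h5
  have h0 := coeff_zero _ hkey
  simp only [neg_zero, zpow_zero, mul_one] at h0
  exact add_self_eq_zero.mp h0
end
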